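/- arXiv:1910.03013 — 13 statements merged into one kernel-verified Lean document; each statement's English description precedes it below -/
import Mathlib

section
/- Let N be an even positive integer with N ≥ 4, let X : ℕ → ℝ, and define J(τ) = 2 ∑_{u=0}^{N/2−1} X(u)(1 + cos(2πτu/N)) for integer τ. Then for every integer u with 1 ≤ u ≤ N/2 − 1, X(u) = (1/N) ∑_{τ=1}^{N} J(τ) cos(2πτu/N). -/
open Real Complex Finset

lemma cos_shift_sum (N : ℕ) (hN : 0 < N) (k : ℤ) (hk : ¬ ((N:ℤ) ∣ k)) :
    ∑ i ∈ Finset.range N, Real.cos (2 * Real.pi * ((i:ℝ)+1) * (k:ℝ) / (N:ℝ)) = 0 := by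
  have hNne : (N:ℝ) ≠ 0 := Nat.cast_ne_zero.mpr hN.ne'
  set θ : ℝ := 2 * Real.pi * (k:ℝ) / (N:ℝ) with hθ
  set ω : ℂ := Complex.exp ((θ:ℝ) * Complex.I) with hω
  have hpow : ∀ m : ℕ, ω ^ m = Complex.exp (((m:ℝ) * θ : ℝ) * Complex.I) := by
    intro m
    rw [hω, ← Complex.exp_nat_mul]
    push_cast
    ring_nf
  have hωN : ω ^ N = 1 := by
    rw [hpow]
    have : (((N:ℝ) * θ : ℝ) : ℂ) * Complex.I = (k:ℤ) * (2 * Real.pi * Complex.I) := by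
      have hNC : (N:ℂ) ≠ 0 := by exact_mod_cast hNne
      push_cast
      field_simp [hθ]
      rw [hθ]; push_cast; field_simp
    rw [this, Complex.exp_int_mul_two_pi_mul_I]
  have hω1 : ω ≠ 1 := by
    intro h
    rw [hω, Complex.exp_eq_one_iff] at h
    obtain ⟨n, hn⟩ := h
    apply hk
    have h2 : (θ : ℂ) = n * (2 * Real.pi) := by
      apply mul_right_cancel₀ Complex.I_ne_zero
      linear_combination hn
    have h3 : θ = n * (2 * Real.pi) := by exact_mod_cast h2
    rw [hθ] at h3
    have hπ : Real.pi ≠ 0 := Real.pi_ne_zero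
    have h4 : 2 * Real.pi * (k:ℝ) = (n:ℝ) * (2 * Real.pi) * N := by
      have h5 := congrArg (fun x => x * (N:ℝ)) h3
      simp only [div_mul_cancel₀ _ hNne] at h5
      exact h5
    have hkr : (k:ℝ) = n * N :=
      mul_left_cancel₀ (by positivity : (2*Real.pi) ≠ 0)
        (by linear_combination h4)
    have hk' : k = n * N := by exact_mod_cast hkr
    exact ⟨n, by rw [hk']; ring⟩
  have hsum : ∑ i ∈ Finset.range N, ω ^ (i+1) = 0 := by
    have : ∑ i ∈ Finset.range N, ω ^ (i+1) = ω * ∑ i ∈ Finset.range N, ω ^ i := by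
      rw [Finset.mul_sum]; exact Finset.sum_congr rfl fun i _ => by ring
    rw [this, geom_sum_eq hω1, hωN]
    simp
  have hre : ∀ i : ℕ, Real.cos (2 * Real.pi * ((i:ℝ)+1) * (k:ℝ) / (N:ℝ)) = (ω ^ (i+1)).re := by
    intro i
    rw [hpow, Complex.exp_ofReal_mul_I_re]
    congr 1
    rw [hθ]; push_cast; ring
  calc ∑ i ∈ Finset.range N, Real.cos (2 * Real.pi * ((i:ℝ)+1) * (k:ℝ) / (N:ℝ))
      = (∑ i ∈ Finset.range N, ω ^ (i+1)).re := by
        rw [Complex.re_sum]; exact Finset.sum_congr rfl fun i _ => hre i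
    _ = 0 := by rw [hsum]; simp

lemma not_dvd_small (N : ℕ) (k : ℤ) (h0 : k ≠ 0) (h : |k| < N) : ¬ ((N:ℤ) ∣ k) := by
  intro hd
  have h1 : (N:ℤ) ∣ |k| := (dvd_abs (N:ℤ) k).mpr hd
  have h2 : (N:ℤ) ≤ |k| := Int.le_of_dvd (abs_pos.mpr h0) h1
  omega

theorem stmt1 (N : ℕ) (hNeven : Even N) (hN : 4 ≤ N)
    (X : ℕ → ℝ) (J : ℤ → ℝ)
    (hJ : ∀ τ : ℤ, J τ = 2 * ∑ u ∈ Finset.range (N / 2), X u * (1 + Real.cos (2 * Real.pi * (τ : ℝ) * (u : ℝ) / (N : ℝ))))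
    (u : ℕ) (hu1 : 1 ≤ u) (hu2 : u ≤ N / 2 - 1) :
    X u = (1 / (N : ℝ)) * ∑ τ ∈ Finset.Icc (1 : ℤ) (N : ℤ), J τ * Real.cos (2 * Real.pi * (τ : ℝ) * (u : ℝ) / (N : ℝ)) := by
  have hN0 : 0 < N := by omega
  have hNne : (N:ℝ) ≠ 0 := Nat.cast_ne_zero.mpr hN0.ne'
  have huN : u < N / 2 := by omega
  have hNdiv : N / 2 + N / 2 = N := by obtain ⟨m, hm⟩ := hNeven; omega
  have hmap : Finset.Icc (1:ℤ) (N:ℤ)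
      = Finset.map ⟨fun i : ℕ => (i:ℤ)+1, by have hi : Function.Injective (fun i : ℕ => (i:ℤ)+1) := (fun a b h => by simpa using h); exact hi⟩ (Finset.range N) := by
    ext τ
    simp only [Finset.mem_Icc, Finset.mem_map, Finset.mem_range, Function.Embedding.coeFn_mk]
    constructor
    · rintro ⟨h1, h2⟩; exact ⟨(τ-1).toNat, by omega, by omega⟩
    · rintro ⟨i, hi, rfl⟩; omega
  rw [hmap, Finset.sum_map]
  simp only [Function.Embedding.coeFn_mk, hJ]
  push_cast
  have hterm : ∀ i ∈ Finset.range N,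
      (2 * ∑ v ∈ Finset.range (N/2), X v * (1 + Real.cos (2*Real.pi*((i:ℝ)+1)*(v:ℝ)/(N:ℝ)))) * Real.cos (2*Real.pi*((i:ℝ)+1)*(u:ℝ)/(N:ℝ))
      = ∑ v ∈ Finset.range (N/2),
          (2 * X v * Real.cos (2*Real.pi*((i:ℝ)+1)*(((u:ℕ):ℤ):ℝ)/(N:ℝ))
           + X v * Real.cos (2*Real.pi*((i:ℝ)+1)*((((v:ℤ)+(u:ℤ)) : ℤ):ℝ)/(N:ℝ))
           + X v * Real.cos (2*Real.pi*((i:ℝ)+1)*((((v:ℤ)-(u:ℤ)) : ℤ):ℝ)/(N:ℝ))) := by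
    intro i _
    rw [Finset.mul_sum, Finset.sum_mul]
    refine Finset.sum_congr rfl fun v _ => ?_
    have hs : 2*Real.pi*((i:ℝ)+1)*((((v:ℤ)+(u:ℤ)) : ℤ):ℝ)/(N:ℝ)
        = 2*Real.pi*((i:ℝ)+1)*(u:ℝ)/(N:ℝ) + 2*Real.pi*((i:ℝ)+1)*(v:ℝ)/(N:ℝ) := by
      push_cast; ring
    have hd : 2*Real.pi*((i:ℝ)+1)*((((v:ℤ)-(u:ℤ)) : ℤ):ℝ)/(N:ℝ)
        = 2*Real.pi*((i:ℝ)+1)*(v:ℝ)/(N:ℝ) - 2*Real.pi*((i:ℝ)+1)*(u:ℝ)/(N:ℝ) := by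
      push_cast; ring
    have he : (((u:ℕ):ℤ):ℝ) = (u:ℝ) := by push_cast; ring
    rw [hs, hd, he, Real.cos_add, Real.cos_sub]
    ring
  rw [Finset.sum_congr rfl hterm, Finset.sum_comm]
  have hv : ∀ v ∈ Finset.range (N/2),
      (∑ i ∈ Finset.range N,
          (2 * X v * Real.cos (2*Real.pi*((i:ℝ)+1)*(((u:ℕ):ℤ):ℝ)/(N:ℝ))
           + X v * Real.cos (2*Real.pi*((i:ℝ)+1)*((((v:ℤ)+(u:ℤ)) : ℤ):ℝ)/(N:ℝ))
           + X v * Real.cos (2*Real.pi*((i:ℝ)+1)*((((v:ℤ)-(u:ℤ)) : ℤ):ℝ)/(N:ℝ))))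
      = if v = u then (N:ℝ) * X v else 0 := by
    intro v hvmem
    rw [Finset.mem_range] at hvmem
    have hA : ∑ i ∈ Finset.range N, Real.cos (2*Real.pi*((i:ℝ)+1)*(((u:ℕ):ℤ):ℝ)/(N:ℝ)) = 0 :=
      cos_shift_sum N hN0 (u:ℤ) (not_dvd_small N (u:ℤ) (by exact_mod_cast (by omega : u ≠ 0)) (by
        rw [abs_of_pos (by exact_mod_cast hu1)]; exact_mod_cast (by omega : u < N)))
    have hB : ∑ i ∈ Finset.range N, Real.cos (2*Real.pi*((i:ℝ)+1)*((((v:ℤ)+(u:ℤ)) : ℤ):ℝ)/(N:ℝ)) = 0 :=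
      cos_shift_sum N hN0 ((v:ℤ)+(u:ℤ)) (not_dvd_small N ((v:ℤ)+(u:ℤ)) (by omega) (by
        rw [abs_of_pos (by omega)]
        have : v + u < N := by omega
        exact_mod_cast this))
    have hC : ∑ i ∈ Finset.range N, Real.cos (2*Real.pi*((i:ℝ)+1)*((((v:ℤ)-(u:ℤ)) : ℤ):ℝ)/(N:ℝ))
        = if v = u then (N:ℝ) else 0 := by
      by_cases hvu : v = u
      · subst hvu
        simp [Finset.sum_const, Finset.card_range]
      · rw [if_neg hvu]
        refine cos_shift_sum N hN0 ((v:ℤ)-(u:ℤ)) (not_dvd_small N ((v:ℤ)-(u:ℤ)) (by omega) ?_)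
        have h1 : (v:ℤ) - (u:ℤ) < N := by omega
        have h2 : -(N:ℤ) < (v:ℤ) - (u:ℤ) := by omega
        rw [abs_lt]; omega
    rw [Finset.sum_add_distrib, Finset.sum_add_distrib, ← Finset.mul_sum, ← Finset.mul_sum,
      ← Finset.mul_sum, hA, hB, hC]
    by_cases hvu : v = u <;> simp [hvu] <;> ring
  rw [Finset.sum_congr rfl hv, Finset.sum_ite_eq' (Finset.range (N/2)) u (fun v => (N:ℝ) * X v),
    if_pos (Finset.mem_range.mpr huN)]
  field_simp
end

section
/- Let N be an even positive integer with N ≥ 4, let X : ℕ → ℝ, and define J(τ) = 2 ∑_{u=0}^{N/2−1} X(u)(1 + cos(2πτu/N)) for integer τ. Then X(0) = (1/(4N)) ∑_{τ=1}^{N} J(τ) − (1/2) ∑_{u₁=1}^{N/2−1} X(u₁). -/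
open Real Complex Finset

lemma geom_zero (N u : ℕ) (hu : 0 < u) (huN : u < N) :
    ∑ n ∈ Finset.range N, Complex.exp (2 * Real.pi * Complex.I * u / N) ^ n = 0 := by
  have hN0 : (N:ℂ) ≠ 0 := by exact_mod_cast (by omega : N ≠ 0)
  set z : ℂ := Complex.exp (2 * Real.pi * Complex.I * u / N) with hz
  have hzN : z ^ N = 1 := by
    rw [hz, ← Complex.exp_nat_mul]
    have : (N:ℂ) * (2 * Real.pi * Complex.I * u / N) = (u:ℤ) * (2 * Real.pi * Complex.I) := by
      push_cast; field_simp
    rw [this, Complex.exp_int_mul_two_pi_mul_I]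
  have hz1 : z ≠ 1 := by
    intro h
    rw [hz, Complex.exp_eq_one_iff] at h
    obtain ⟨n, hn⟩ := h
    have hpi : (Real.pi : ℂ) ≠ 0 := by exact_mod_cast Real.pi_ne_zero
    have : (u : ℂ) = n * N := by
      field_simp at hn
      have h2 : 2 * (Real.pi:ℂ) * Complex.I ≠ 0 := by
        simp [Real.pi_ne_zero, Complex.I_ne_zero, hpi]
      apply mul_left_cancel₀ h2
      linear_combination (2 * (Real.pi:ℂ) * Complex.I) * hn
    have h2 : (u : ℤ) = n * N := by exact_mod_cast this
    have hNpos : (0:ℤ) < N := by exact_mod_cast (by omega : 0 < N)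
    have hupos : (0:ℤ) < u := by exact_mod_cast hu
    have huN' : (u:ℤ) < N := by exact_mod_cast huN
    nlinarith [mul_le_mul_of_nonneg_right (by nlinarith : (1:ℤ) ≤ n) hNpos.le]
  rw [geom_sum_eq hz1 N, hzN]
  simp

lemma cos_sum (N u : ℕ) (hu : 0 < u) (huN : u < N) :
    ∑ τ ∈ Finset.Icc (1:ℤ) (N:ℤ), Real.cos (2 * Real.pi * (τ:ℝ) * u / N) = 0 := by
  have hN0 : (N:ℝ) ≠ 0 := by exact_mod_cast (by omega : N ≠ 0)
  have hmap : Finset.Icc (1:ℤ) (N:ℤ) = Finset.image (fun n : ℕ => (n:ℤ)+1) (Finset.range N) := by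
    ext x
    simp only [Finset.mem_Icc, Finset.mem_image, Finset.mem_range]
    constructor
    · rintro ⟨h1, h2⟩
      exact ⟨(x-1).toNat, by omega, by omega⟩
    · rintro ⟨n, hn, rfl⟩
      omega
  rw [hmap, Finset.sum_image (by intro a _ b _ h; dsimp only at h; omega)]
  have key : ∀ n : ℕ, Real.cos (2 * Real.pi * ((n:ℤ)+1 : ℤ) * u / N)
      = (Complex.exp (2 * Real.pi * Complex.I * u / N) ^ (n+1)).re := by
    intro n
    rw [← Complex.exp_nat_mul]
    have : ((n:ℂ)+1) * (2 * Real.pi * Complex.I * u / N)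
        = ((2 * Real.pi * ((n:ℝ)+1) * u / N : ℝ) : ℂ) * Complex.I := by
      push_cast; field_simp
    push_cast
    rw [this, Complex.exp_ofReal_mul_I_re]
  simp only [key]
  rw [← Complex.re_sum]
  have : ∑ n ∈ Finset.range N, Complex.exp (2 * Real.pi * Complex.I * u / N) ^ (n+1)
      = Complex.exp (2 * Real.pi * Complex.I * u / N)
        * ∑ n ∈ Finset.range N, Complex.exp (2 * Real.pi * Complex.I * u / N) ^ n := by
    rw [Finset.mul_sum]
    exact Finset.sum_congr rfl (fun n _ => by ring)
  rw [this, geom_zero N u hu huN]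
  simp

lemma split_sum (m : ℕ) (hm : 0 < m) (g : ℕ → ℝ) :
    ∑ u ∈ Finset.range m, g u = g 0 + ∑ u ∈ Finset.Icc 1 (m-1), g u := by
  have h : Finset.Icc 1 (m-1) = Finset.Ico 1 m := by
    ext x; simp only [Finset.mem_Icc, Finset.mem_Ico]; omega
  rw [h, Finset.range_eq_Ico, Finset.sum_eq_sum_Ico_succ_bot hm]

theorem stmt2 (N : ℕ) (hNeven : Even N) (hN : 4 ≤ N)
    (X : ℕ → ℝ) (J : ℤ → ℝ)
    (hJ : ∀ τ : ℤ, J τ = 2 * ∑ u ∈ Finset.range (N / 2), X u * (1 + Real.cos (2 * Real.pi * (τ : ℝ) * (u : ℝ) / (N : ℝ)))) :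
    X 0 = (1 / (4 * (N : ℝ))) * ∑ τ ∈ Finset.Icc (1 : ℤ) (N : ℤ), J τ
        - (1 / 2) * ∑ u₁ ∈ Finset.Icc 1 (N / 2 - 1), X u₁ := by
  have hN0 : (N:ℝ) ≠ 0 := by exact_mod_cast (by omega : N ≠ 0)
  have hcard : (Finset.Icc (1:ℤ) (N:ℤ)).card = N := by
    rw [Int.card_Icc]; omega
  have hm : 0 < N / 2 := by omega
  have hsum : ∑ τ ∈ Finset.Icc (1:ℤ) (N:ℤ), J τ
      = 4*(N:ℝ) * X 0 + 2*(N:ℝ) * ∑ u ∈ Finset.Icc 1 (N/2-1), X u := by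
    simp only [hJ]
    rw [← Finset.mul_sum, Finset.sum_comm]
    rw [split_sum (N/2) hm]
    have h0 : ∑ τ ∈ Finset.Icc (1:ℤ) (N:ℤ),
        X 0 * (1 + Real.cos (2 * Real.pi * (τ:ℝ) * ((0:ℕ):ℝ) / (N:ℝ))) = X 0 * (2*(N:ℝ)) := by
      have : ∀ τ ∈ Finset.Icc (1:ℤ) (N:ℤ),
          X 0 * (1 + Real.cos (2 * Real.pi * (τ:ℝ) * ((0:ℕ):ℝ) / (N:ℝ))) = X 0 * 2 := by
        intro τ _; norm_num
      rw [Finset.sum_congr rfl this, Finset.sum_const, hcard]; push_cast; ring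
    have h1 : ∀ u ∈ Finset.Icc 1 (N/2-1),
        ∑ τ ∈ Finset.Icc (1:ℤ) (N:ℤ),
          X u * (1 + Real.cos (2 * Real.pi * (τ:ℝ) * (u:ℝ) / (N:ℝ))) = X u * (N:ℝ) := by
      intro u hu
      simp only [Finset.mem_Icc] at hu
      rw [← Finset.mul_sum, Finset.sum_add_distrib, Finset.sum_const, hcard,
        cos_sum N u (by omega) (by omega)]
      push_cast; ring
    rw [h0, Finset.sum_congr rfl h1, ← Finset.sum_mul]
    ring
  rw [hsum]
  field_simp
  ring
end

section
/- Let N be an even positive integer with N ≥ 4, let X : ℕ → ℝ, and define J(τ) = 2 ∑_{u=0}^{N/2−1} X(u)(1 + cos(2πτu/N)) for integer τ. Then for every integer u with 1 ≤ u ≤ N/2 − 1, X(u) = Re( (1/N) ∑_{τ=1}^{N} J(τ) exp(i·2πτu/N) ), where i is the imaginary unit and the observations J(τ) are regarded as complex numbers. -/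
open Real Complex Finset


lemma sumE (N : ℕ) (hN : 0 < N) (k : ℤ) :
    ∑ τ ∈ Finset.Icc (1:ℤ) (N:ℤ), Complex.exp (2 * Real.pi * Complex.I * τ * k / N)
      = if (N:ℤ) ∣ k then (N:ℂ) else 0 := by
  set z : ℂ := Complex.exp (2 * Real.pi * Complex.I * k / N) with hz
  have hzpow : ∀ t : ℕ, Complex.exp (2 * Real.pi * Complex.I * (((1 + (t:ℤ)):ℤ):ℂ) * k / N) = z ^ (t+1) := by
    intro t
    rw [hz, ← Complex.exp_nat_mul]
    congr 1
    push_cast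
    ring
  have hmap : Finset.Icc (1:ℤ) (N:ℤ)
      = (Finset.range N).map (Nat.castEmbedding.trans <| addLeftEmbedding 1) := by
    rw [Int.Icc_eq_finset_map]
    have : ((N:ℤ) + 1 - 1).toNat = N := by omega
    rw [this]
  rw [hmap, Finset.sum_map]
  simp only [Function.Embedding.trans_apply, Nat.castEmbedding_apply, addLeftEmbedding_apply]
  rw [Finset.sum_congr rfl fun t _ => hzpow t]
  have hNne : (N:ℂ) ≠ 0 := Nat.cast_ne_zero.mpr hN.ne'
  have hzN : z ^ N = 1 := by
    rw [hz, ← Complex.exp_nat_mul]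
    have : (N:ℂ) * (2 * Real.pi * Complex.I * k / N) = k * (2 * Real.pi * Complex.I) := by
      rw [mul_comm, div_mul_cancel₀ _ hNne]; ring
    rw [this, Complex.exp_int_mul_two_pi_mul_I]
  have hz1 : z = 1 ↔ (N:ℤ) ∣ k := by
    rw [hz, Complex.exp_eq_one_iff]
    constructor
    · rintro ⟨n, hn⟩
      refine ⟨n, ?_⟩
      have hπ : (Real.pi : ℂ) ≠ 0 := Complex.ofReal_ne_zero.mpr Real.pi_ne_zero
      field_simp at hn
      have h2 : (2:ℂ) * Real.pi * Complex.I ≠ 0 := by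
        simp [Complex.I_ne_zero, hπ]
      have heq : (k:ℂ) * (2 * Real.pi * Complex.I) = ((n:ℂ) * N) * (2 * Real.pi * Complex.I) := by
        linear_combination (2 * Real.pi * Complex.I) * hn
      have hk : (k:ℂ) = (n:ℂ) * N := mul_right_cancel₀ h2 heq
      have hk' : k = n * N := by exact_mod_cast hk
      rw [hk', mul_comm]
    · rintro ⟨n, rfl⟩
      refine ⟨n, ?_⟩
      push_cast
      field_simp
  by_cases hdvd : (N:ℤ) ∣ k
  · have : z = 1 := hz1.mpr hdvd
    simp [this, hdvd]
  · rw [if_neg hdvd]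
    have hzne : z ≠ 1 := fun h => hdvd (hz1.mp h)
    have : ∑ t ∈ Finset.range N, z ^ (t+1) = z * ∑ t ∈ Finset.range N, z ^ t := by
      rw [Finset.mul_sum]
      exact Finset.sum_congr rfl fun t _ => by ring
    rw [this, geom_sum_eq hzne, hzN]
    simp

theorem stmt3 (N : ℕ) (hNeven : Even N) (hN : 4 ≤ N)
    (X : ℕ → ℝ) (J : ℤ → ℝ)
    (hJ : ∀ τ : ℤ, J τ = 2 * ∑ u ∈ Finset.range (N / 2), X u * (1 + Real.cos (2 * Real.pi * (τ : ℝ) * (u : ℝ) / (N : ℝ))))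
    (u : ℕ) (hu1 : 1 ≤ u) (hu2 : u ≤ N / 2 - 1) :
    X u = ((1 / (N : ℂ)) * ∑ τ ∈ Finset.Icc (1 : ℤ) (N : ℤ),
      (J τ : ℂ) * Complex.exp (Complex.I * ((2 * Real.pi * (τ : ℝ) * (u : ℝ) / (N : ℝ) : ℝ) : ℂ))).re := by
  obtain ⟨r, hr⟩ := hNeven
  have hN0 : 0 < N := by omega
  have hNne : (N:ℂ) ≠ 0 := Nat.cast_ne_zero.mpr hN0.ne'
  set M := N / 2 with hM
  have hMr : M = r := by omega
  have huM : u < M := by omega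
  have hterm : ∀ τ : ℤ, (J τ : ℂ) * Complex.exp (Complex.I * ((2 * Real.pi * (τ : ℝ) * (u : ℝ) / (N : ℝ) : ℝ) : ℂ))
      = ∑ v ∈ Finset.range M, ((X v : ℂ) *
          (2 * Complex.exp (2 * Real.pi * Complex.I * τ * ((u:ℤ)) / N)
            + Complex.exp (2 * Real.pi * Complex.I * τ * ((u:ℤ) + (v:ℤ)) / N)
            + Complex.exp (2 * Real.pi * Complex.I * τ * ((u:ℤ) - (v:ℤ)) / N))) := by
    intro τ
    rw [hJ τ]
    push_cast
    rw [Finset.mul_sum, Finset.sum_mul]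
    refine Finset.sum_congr rfl fun v hv => ?_
    have hcos : Complex.cos (2 * (π:ℂ) * (τ:ℂ) * (v:ℂ) / (N:ℂ))
        = (Complex.exp ((2 * (π:ℂ) * (τ:ℂ) * (v:ℂ) / (N:ℂ)) * Complex.I)
          + Complex.exp (-(2 * (π:ℂ) * (τ:ℂ) * (v:ℂ) / (N:ℂ)) * Complex.I)) / 2 := rfl
    have e0 : Complex.exp (2 * (π:ℂ) * Complex.I * (τ:ℂ) * (u:ℂ) / (N:ℂ))
        = Complex.exp (Complex.I * (2 * (π:ℂ) * (τ:ℂ) * (u:ℂ) / (N:ℂ))) := by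
      congr 1; ring
    have e1 : Complex.exp (2 * (π:ℂ) * Complex.I * (τ:ℂ) * ((u:ℂ) + (v:ℂ)) / (N:ℂ))
        = Complex.exp (Complex.I * (2 * (π:ℂ) * (τ:ℂ) * (u:ℂ) / (N:ℂ)))
          * Complex.exp ((2 * (π:ℂ) * (τ:ℂ) * (v:ℂ) / (N:ℂ)) * Complex.I) := by
      rw [← Complex.exp_add]; congr 1; ring
    have e2 : Complex.exp (2 * (π:ℂ) * Complex.I * (τ:ℂ) * ((u:ℂ) - (v:ℂ)) / (N:ℂ))
        = Complex.exp (Complex.I * (2 * (π:ℂ) * (τ:ℂ) * (u:ℂ) / (N:ℂ)))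
          * Complex.exp (-(2 * (π:ℂ) * (τ:ℂ) * (v:ℂ) / (N:ℂ)) * Complex.I) := by
      rw [← Complex.exp_add]; congr 1; ring
    rw [hcos, e0, e1, e2]
    ring
  have key : ∑ τ ∈ Finset.Icc (1 : ℤ) (N : ℤ),
      (J τ : ℂ) * Complex.exp (Complex.I * ((2 * Real.pi * (τ : ℝ) * (u : ℝ) / (N : ℝ) : ℝ) : ℂ))
      = (N:ℂ) * (X u : ℂ) := by
    rw [Finset.sum_congr rfl fun τ _ => hterm τ, Finset.sum_comm]
    have hVal : ∀ v ∈ Finset.range M,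
        (∑ τ ∈ Finset.Icc (1:ℤ) (N:ℤ), ((X v : ℂ) *
          (2 * Complex.exp (2 * Real.pi * Complex.I * τ * ((u:ℤ)) / N)
            + Complex.exp (2 * Real.pi * Complex.I * τ * ((u:ℤ) + (v:ℤ)) / N)
            + Complex.exp (2 * Real.pi * Complex.I * τ * ((u:ℤ) - (v:ℤ)) / N))))
        = if v = u then (N:ℂ) * (X u : ℂ) else 0 := by
      intro v hv
      have hvM : v < M := Finset.mem_range.mp hv
      rw [← Finset.mul_sum]
      have hsplit : ∑ τ ∈ Finset.Icc (1:ℤ) (N:ℤ),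
          (2 * Complex.exp (2 * Real.pi * Complex.I * τ * ((u:ℤ)) / N)
            + Complex.exp (2 * Real.pi * Complex.I * τ * ((u:ℤ) + (v:ℤ)) / N)
            + Complex.exp (2 * Real.pi * Complex.I * τ * ((u:ℤ) - (v:ℤ)) / N))
          = 2 * (∑ τ ∈ Finset.Icc (1:ℤ) (N:ℤ), Complex.exp (2 * Real.pi * Complex.I * τ * ((u:ℤ)) / N))
            + (∑ τ ∈ Finset.Icc (1:ℤ) (N:ℤ), Complex.exp (2 * Real.pi * Complex.I * τ * ((u:ℤ) + (v:ℤ)) / N))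
            + (∑ τ ∈ Finset.Icc (1:ℤ) (N:ℤ), Complex.exp (2 * Real.pi * Complex.I * τ * ((u:ℤ) - (v:ℤ)) / N)) := by
        rw [Finset.sum_add_distrib, Finset.sum_add_distrib, Finset.mul_sum]
      have s1 := sumE N hN0 ((u:ℤ))
      have s2 := sumE N hN0 ((u:ℤ) + (v:ℤ))
      have s3 := sumE N hN0 ((u:ℤ) - (v:ℤ))
      rw [hsplit]
      push_cast at s1 s2 s3 ⊢
      rw [s1, s2, s3]
      have h1 : ¬ ((N:ℤ) ∣ ((u:ℤ))) := by
        intro hd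
        have := Int.le_of_dvd (by exact_mod_cast hu1) hd
        omega
      have h2 : ¬ ((N:ℤ) ∣ ((u:ℤ) + (v:ℤ))) := by
        intro hd
        have := Int.le_of_dvd (by positivity) hd
        omega
      rw [if_neg h1, if_neg h2]
      by_cases hvu : v = u
      · subst hvu
        simp [hNne]
        ring
      · have h3 : ¬ ((N:ℤ) ∣ ((u:ℤ) - (v:ℤ))) := by
          intro hd
          have hne : (u:ℤ) - (v:ℤ) ≠ 0 := by
            intro h; apply hvu; omega
          have := Int.le_of_dvd (abs_pos.mpr hne) ((dvd_abs _ _).mpr hd)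
          have habs : |(u:ℤ) - (v:ℤ)| ≤ (M:ℤ) - 1 := by
            rw [abs_le]; omega
          omega
        rw [if_neg h3, if_neg hvu]
        ring
    rw [Finset.sum_congr rfl hVal, Finset.sum_ite_eq' (Finset.range M) u]
    rw [if_pos (Finset.mem_range.mpr huM)]
  rw [key]
  have : (1 / (N:ℂ)) * ((N:ℂ) * (X u : ℂ)) = ((X u : ℝ) : ℂ) := by
    field_simp
  rw [this, Complex.ofReal_re]
end

section
/- Let N be an even positive integer with N ≥ 4, let X : ℕ → ℝ, and define J(τ) = 2 ∑_{u=0}^{N/2−1} X(u)(1 + cos(2πτu/N)) for integer τ. Then for every integer u with 1 ≤ u ≤ N/2 − 1, X(u) = (1/N) ∑_{τ=0}^{N−1} J(τ) cos(2πτu/N). -/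
open Real Complex Finset

lemma sum_cos_key (N : ℕ) (hN : 0 < N) (k : ℤ) :
    ∑ τ ∈ Finset.range N, Real.cos (2 * Real.pi * (k:ℝ) * (τ:ℝ) / N) =
      if (N:ℤ) ∣ k then (N:ℝ) else 0 := by
  have hNne : (N:ℝ) ≠ 0 := Nat.cast_ne_zero.mpr hN.ne'
  by_cases hdvd : (N:ℤ) ∣ k
  · obtain ⟨m, rfl⟩ := hdvd
    rw [if_pos ⟨m, rfl⟩]
    have : ∀ τ ∈ Finset.range N, Real.cos (2 * Real.pi * ((((N:ℤ)*m :ℤ)):ℝ) * (τ:ℝ) / N) = 1 := by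
      intro τ _
      have : 2 * Real.pi * ((((N:ℤ)*m:ℤ)):ℝ) * (τ:ℝ) / N = ((m * τ : ℤ):ℝ) * (2 * Real.pi) := by
        push_cast; field_simp
      rw [this, Real.cos_int_mul_two_pi]
    rw [Finset.sum_congr rfl this]
    simp
  · rw [if_neg hdvd]
    set ζ : ℂ := Complex.exp (((2 * Real.pi * k / N : ℝ) : ℂ) * Complex.I) with hζdef
    have hpow : ∀ τ : ℕ, ζ ^ τ = Complex.exp (((2 * Real.pi * (k:ℝ) * τ / N : ℝ) : ℂ) * Complex.I) := by
      intro τ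
      rw [hζdef, ← Complex.exp_nat_mul]
      congr 1
      push_cast
      ring
    have hζN : ζ ^ N = 1 := by
      rw [hpow]
      have h0 : (2 * Real.pi * (k:ℝ) * N / N : ℝ) = (k:ℝ) * (2 * Real.pi) := by
        field_simp
      have h1 : ((2 * Real.pi * (k:ℝ) * N / N : ℝ) : ℂ) * Complex.I = k * (2 * Real.pi * Complex.I) := by
        rw [h0]; push_cast; ring
      rw [h1, Complex.exp_int_mul_two_pi_mul_I]
    have hζ1 : ζ ≠ 1 := by
      intro h
      rw [hζdef, Complex.exp_eq_one_iff] at h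
      obtain ⟨n, hn⟩ := h
      apply hdvd
      have h2 : ((2 * Real.pi * k / N : ℝ) : ℂ) = ((n * (2 * Real.pi) : ℝ) : ℂ) := by
        have := mul_right_cancel₀ Complex.I_ne_zero
          (hn.trans (by push_cast; ring : (n:ℂ) * (2 * (Real.pi:ℂ) * Complex.I) = ((n * (2*Real.pi) : ℝ):ℂ) * Complex.I))
        exact this
      have h3 : 2 * Real.pi * k / N = n * (2 * Real.pi) := Complex.ofReal_injective h2
      have h3' : (2 * Real.pi) * (k:ℝ) = (2 * Real.pi) * ((n:ℝ) * N) := by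
        field_simp at h3
        ring_nf at h3 ⊢
        rw [h3]; ring
      have hk : (k:ℝ) = (n:ℝ) * N :=
        mul_left_cancel₀ (by positivity : (2:ℝ) * Real.pi ≠ 0) h3'
      have hk' : k = N * n := by
        have : (k:ℝ) = (((N:ℤ) * n : ℤ) : ℝ) := hk.trans (by push_cast; ring)
        exact_mod_cast this
      exact ⟨n, hk'⟩
    have hsum : ∑ τ ∈ Finset.range N, ζ ^ τ = 0 := by
      rw [geom_sum_eq hζ1, hζN]
      simp
    have := congrArg Complex.re hsum
    rw [Complex.re_sum] at this
    simp only [hpow, Complex.exp_ofReal_mul_I_re] at this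
    exact this

theorem stmt4 (N : ℕ) (hNeven : Even N) (hN : 4 ≤ N)
    (X : ℕ → ℝ) (J : ℤ → ℝ)
    (hJ : ∀ τ : ℤ, J τ = 2 * ∑ u ∈ Finset.range (N / 2), X u * (1 + Real.cos (2 * Real.pi * (τ : ℝ) * (u : ℝ) / (N : ℝ))))
    (u : ℕ) (hu1 : 1 ≤ u) (hu2 : u ≤ N / 2 - 1) :
    X u = (1 / (N : ℝ)) * ∑ τ ∈ Finset.Icc (0 : ℤ) ((N : ℤ) - 1), J τ * Real.cos (2 * Real.pi * (τ : ℝ) * (u : ℝ) / (N : ℝ)) := by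
  obtain ⟨m, hm⟩ := hNeven
  have hNpos : 0 < N := by omega
  have hm2 : 2 ≤ m := by omega
  have hhalf : N / 2 = m := by omega
  have hum : u ≤ m - 1 := by omega
  have hNne : (N:ℝ) ≠ 0 := Nat.cast_ne_zero.mpr hNpos.ne'
  have hIcc : ∑ τ ∈ Finset.Icc (0:ℤ) ((N:ℤ)-1), J τ * Real.cos (2*Real.pi*(τ:ℝ)*(u:ℝ)/(N:ℝ))
      = ∑ τ ∈ Finset.range N, J (τ:ℤ) * Real.cos (2*Real.pi*(τ:ℝ)*(u:ℝ)/(N:ℝ)) := by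
    refine Finset.sum_nbij' (fun τ => τ.toNat) (fun τ => (τ:ℤ)) ?_ ?_ ?_ ?_ ?_
    · intro a ha; simp only [Finset.mem_Icc] at ha; simp only [Finset.mem_range]; omega
    · intro a ha; simp only [Finset.mem_range] at ha; simp only [Finset.mem_Icc]; omega
    · intro a ha; simp only [Finset.mem_Icc] at ha; show ((a.toNat : ℕ) : ℤ) = a; omega
    · intro a _; simp
    · intro a ha
      simp only [Finset.mem_Icc] at ha
      have : ((a.toNat : ℕ) : ℝ) = (a : ℝ) := by exact_mod_cast Int.toNat_of_nonneg ha.1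
      rw [Int.toNat_of_nonneg ha.1, this]
  rw [hIcc]
  have hstep : ∀ τ ∈ Finset.range N, J (τ:ℤ) * Real.cos (2*Real.pi*(τ:ℝ)*(u:ℝ)/(N:ℝ))
      = ∑ v ∈ Finset.range (N/2), (X v * (2 * Real.cos (2*Real.pi*(((u:ℤ)):ℝ)*(τ:ℝ)/(N:ℝ))
          + Real.cos (2*Real.pi*((((v:ℤ)+(u:ℤ)):ℤ):ℝ)*(τ:ℝ)/(N:ℝ))
          + Real.cos (2*Real.pi*((((v:ℤ)-(u:ℤ)):ℤ):ℝ)*(τ:ℝ)/(N:ℝ)))) := by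
    intro τ _
    rw [hJ]
    rw [Finset.mul_sum, Finset.sum_mul]
    refine Finset.sum_congr rfl ?_
    intro v _
    have eplus : 2*Real.pi*((((v:ℤ)+(u:ℤ)):ℤ):ℝ)*(τ:ℝ)/(N:ℝ)
        = 2*Real.pi*(((τ:ℤ)):ℝ)*(v:ℝ)/(N:ℝ) + 2*Real.pi*(τ:ℝ)*(u:ℝ)/(N:ℝ) := by
      push_cast; ring
    have eminus : 2*Real.pi*((((v:ℤ)-(u:ℤ)):ℤ):ℝ)*(τ:ℝ)/(N:ℝ)
        = 2*Real.pi*(((τ:ℤ)):ℝ)*(v:ℝ)/(N:ℝ) - 2*Real.pi*(τ:ℝ)*(u:ℝ)/(N:ℝ) := by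
      push_cast; ring
    have eu : 2*Real.pi*(((u:ℤ)):ℝ)*(τ:ℝ)/(N:ℝ) = 2*Real.pi*(τ:ℝ)*(u:ℝ)/(N:ℝ) := by
      push_cast; ring
    rw [eplus, eminus, eu, Real.cos_add, Real.cos_sub]
    push_cast
    ring
  rw [Finset.sum_congr rfl hstep, Finset.sum_comm]
  have hinner : ∀ v ∈ Finset.range (N/2),
      ∑ τ ∈ Finset.range N, (X v * (2 * Real.cos (2*Real.pi*(((u:ℤ)):ℝ)*(τ:ℝ)/(N:ℝ))
          + Real.cos (2*Real.pi*((((v:ℤ)+(u:ℤ)):ℤ):ℝ)*(τ:ℝ)/(N:ℝ))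
          + Real.cos (2*Real.pi*((((v:ℤ)-(u:ℤ)):ℤ):ℝ)*(τ:ℝ)/(N:ℝ))))
      = if v = u then (N:ℝ) * X v else 0 := by
    intro v hv
    simp only [Finset.mem_range] at hv
    rw [← Finset.mul_sum, Finset.sum_add_distrib, Finset.sum_add_distrib, ← Finset.mul_sum]
    rw [sum_cos_key N hNpos ((u:ℤ)), sum_cos_key N hNpos ((v:ℤ)+(u:ℤ)),
        sum_cos_key N hNpos ((v:ℤ)-(u:ℤ))]
    have h1 : ¬ (N:ℤ) ∣ (u:ℤ) := by
      intro h
      have := Int.le_of_dvd (by exact_mod_cast hu1) h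
      omega
    have h2 : ¬ (N:ℤ) ∣ ((v:ℤ)+(u:ℤ)) := by
      intro h
      have := Int.le_of_dvd (by omega) h
      omega
    by_cases hvu : v = u
    · subst hvu
      have h3 : ((v:ℤ) - (v:ℤ)) = 0 := by ring
      rw [h3]
      simp only [h1, h2, dvd_zero, if_true, if_false]
      ring
    · have h3 : ¬ (N:ℤ) ∣ ((v:ℤ)-(u:ℤ)) := by
        intro h
        have hne : (v:ℤ) - (u:ℤ) ≠ 0 := by
          intro h0; apply hvu; omega
        have habs : (N:ℤ) ∣ |(v:ℤ) - (u:ℤ)| := (dvd_abs _ _).mpr h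
        have := Int.le_of_dvd (abs_pos.mpr hne) habs
        have hlt : |(v:ℤ) - (u:ℤ)| < N := by
          rw [abs_lt]; constructor <;> omega
        omega
      simp only [h1, h2, h3, if_false, if_neg hvu]
      ring
  rw [Finset.sum_congr rfl hinner, Finset.sum_ite_eq' (Finset.range (N/2)) u (fun v => (N:ℝ) * X v)]
  rw [if_pos (by simp only [Finset.mem_range]; omega)]
  field_simp
end

section
/- Let N be an even positive integer with N ≥ 4, let X : ℕ → ℝ, and define J(τ) = 2 ∑_{u=0}^{N/2−1} X(u)(1 + cos(2πτu/N)) for integer τ. Then X(0) = (1/(4N)) ∑_{τ=0}^{N−1} J(τ) − (1/2) ∑_{u₁=1}^{N/2−1} X(u₁). -/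
open Real Complex Finset

theorem cos_sum_zero' (N u : ℕ) (hu : 0 < u) (huN : u < N) :
    ∑ τ ∈ Finset.range N, Real.cos (2 * Real.pi * (τ : ℝ) * (u : ℝ) / (N : ℝ)) = 0 := by
  have hNpos : 0 < N := lt_trans hu huN
  have hNC : (N:ℂ) ≠ 0 := by exact_mod_cast hNpos.ne'
  have hNR : (N:ℝ) ≠ 0 := by exact_mod_cast hNpos.ne'
  set z : ℂ := Complex.exp (2 * Real.pi * (u : ℝ) / (N : ℝ) * Complex.I) with hz
  have hzN : z ^ N = 1 := by
    rw [hz, ← Complex.exp_nat_mul]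
    have : (N:ℂ) * (2 * Real.pi * (u : ℝ) / (N : ℝ) * Complex.I) = (u:ℤ) * (2 * Real.pi * Complex.I) := by
      push_cast; field_simp
    rw [this, Complex.exp_int_mul_two_pi_mul_I]
  have hz1 : z ≠ 1 := by
    rw [hz, Ne, Complex.exp_eq_one_iff]
    rintro ⟨n, hn⟩
    have hn' : ((2 * Real.pi * (u:ℝ) / (N:ℝ) : ℝ) : ℂ) * Complex.I
        = (((n:ℝ) * (2 * Real.pi) : ℝ) : ℂ) * Complex.I := by
      push_cast; push_cast at hn; linear_combination hn
    have hR : (2 * Real.pi * (u:ℝ) / (N:ℝ) : ℝ) = (n:ℝ) * (2 * Real.pi) := by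
      have := mul_right_cancel₀ Complex.I_ne_zero hn'
      exact_mod_cast this
    have huNn : (u:ℝ) = (n:ℝ) * (N:ℝ) := by
      field_simp at hR
      nlinarith [Real.pi_pos]
    have : (u:ℤ) = n * (N:ℤ) := by exact_mod_cast huNn
    rcases le_or_gt n 0 with h | h
    · have : (u:ℤ) ≤ 0 := by nlinarith [Int.natCast_pos.mpr hNpos]
      omega
    · have : (N:ℤ) ≤ (u:ℤ) := by nlinarith
      omega
  have hgeom : ∑ τ ∈ Finset.range N, z ^ τ = 0 := by
    rw [geom_sum_eq hz1, hzN]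
    simp
  have hterm : ∀ τ ∈ Finset.range N,
      Real.cos (2 * Real.pi * (τ : ℝ) * (u : ℝ) / (N : ℝ)) = (z ^ τ).re := by
    intro τ _
    rw [hz, ← Complex.exp_nat_mul]
    have : (τ:ℂ) * (2 * Real.pi * (u : ℝ) / (N : ℝ) * Complex.I)
        = ((2 * Real.pi * (τ : ℝ) * (u : ℝ) / (N : ℝ) : ℝ) : ℂ) * Complex.I := by
      push_cast; ring
    rw [this, Complex.exp_ofReal_mul_I_re]
  rw [Finset.sum_congr rfl hterm, ← Complex.re_sum, hgeom, Complex.zero_re]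

theorem stmt5 (N : ℕ) (hNeven : Even N) (hN : 4 ≤ N)
    (X : ℕ → ℝ) (J : ℤ → ℝ)
    (hJ : ∀ τ : ℤ, J τ = 2 * ∑ u ∈ Finset.range (N / 2), X u * (1 + Real.cos (2 * Real.pi * (τ : ℝ) * (u : ℝ) / (N : ℝ)))) :
    X 0 = (1 / (4 * (N : ℝ))) * ∑ τ ∈ Finset.Icc (0 : ℤ) ((N : ℤ) - 1), J τ
        - (1 / 2) * ∑ u₁ ∈ Finset.Icc 1 (N / 2 - 1), X u₁ := by
  set M := N / 2 with hM
  have hM2 : 2 ≤ M := by omega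
  have hNR : (0:ℝ) < N := by positivity
  have hIcc : ∑ τ ∈ Finset.Icc (0 : ℤ) ((N : ℤ) - 1), J τ = ∑ τ ∈ Finset.range N, J (τ:ℤ) := by
    apply Finset.sum_nbij' (i := Int.toNat) (j := fun n => (n:ℤ)) <;> intros <;>
      simp_all [Finset.mem_Icc, Finset.mem_range] <;> omega
  have hswap : ∑ τ ∈ Finset.range N, J (τ:ℤ)
      = 2 * ∑ u ∈ Finset.range M, X u * ((N:ℝ) + ∑ τ ∈ Finset.range N, Real.cos (2 * Real.pi * (τ : ℝ) * (u : ℝ) / (N : ℝ))) := by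
    simp only [hJ]
    push_cast
    rw [← Finset.mul_sum, Finset.sum_comm]
    congr 1
    apply Finset.sum_congr rfl
    intro u _
    rw [← Finset.mul_sum]
    congr 1
    rw [Finset.sum_add_distrib, Finset.sum_const, Finset.card_range]
    simp
  have hins : Finset.range M = insert 0 (Finset.Icc 1 (M - 1)) := by
    ext x
    simp only [Finset.mem_range, Finset.mem_insert, Finset.mem_Icc]
    omega
  have hval : ∑ u ∈ Finset.range M, X u * ((N:ℝ) + ∑ τ ∈ Finset.range N, Real.cos (2 * Real.pi * (τ : ℝ) * (u : ℝ) / (N : ℝ)))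
      = X 0 * (2 * N) + (N:ℝ) * ∑ u₁ ∈ Finset.Icc 1 (M - 1), X u₁ := by
    rw [hins, Finset.sum_insert (by simp)]
    have h0 : ∑ τ ∈ Finset.range N, Real.cos (2 * Real.pi * (τ : ℝ) * ((0:ℕ) : ℝ) / (N : ℝ)) = N := by
      simp
    rw [h0]
    have : ∀ u ∈ Finset.Icc 1 (M - 1),
        X u * ((N:ℝ) + ∑ τ ∈ Finset.range N, Real.cos (2 * Real.pi * (τ : ℝ) * (u : ℝ) / (N : ℝ)))
        = (N:ℝ) * X u := by
      intro u hu
      simp only [Finset.mem_Icc] at hu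
      rw [cos_sum_zero' N u (by omega) (by omega)]
      ring
    rw [Finset.sum_congr rfl this, ← Finset.mul_sum]
    push_cast
    ring
  rw [hIcc, hswap, hval]
  field_simp
  ring
end

section
/- Let N be an even positive integer with N ≥ 4, let X : ℕ → ℝ satisfy X(u) ≥ 0 for all u, and define J(τ) = 2 ∑_{u=0}^{N/2−1} X(u)(1 + cos(2πτu/N)) for integer τ. Then for every integer u with 1 ≤ u ≤ N/2 − 1, X(u) = | (1/N) ∑_{τ=1}^{N} J(τ) exp(i·2πτu/N) |, where |·| denotes the complex modulus. -/
open Real Complex Finset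

lemma key (N : ℕ) (hN : 0 < N) (k : ℤ) :
    ∑ τ ∈ Finset.Icc (1:ℤ) (N:ℤ), Complex.exp (Complex.I * (2*(Real.pi:ℂ)*(τ:ℂ)*(k:ℂ)/(N:ℂ)))
      = if (N:ℤ) ∣ k then (N:ℂ) else 0 := by
  have hNC : (N:ℂ) ≠ 0 := by exact_mod_cast Nat.cast_ne_zero.mpr hN.ne'
  set ζ : ℂ := Complex.exp (Complex.I * (2*(Real.pi:ℂ)*(k:ℂ)/(N:ℂ))) with hζ
  have hexp : ∀ τ : ℤ, Complex.exp (Complex.I * (2*(Real.pi:ℂ)*(τ:ℂ)*(k:ℂ)/(N:ℂ))) = ζ ^ τ := by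
    intro τ
    rw [hζ, ← Complex.exp_int_mul]
    congr 1
    field_simp
  by_cases hdvd : (N:ℤ) ∣ k
  · obtain ⟨m, hm⟩ := hdvd
    rw [if_pos ⟨m, hm⟩]
    have : ∀ τ ∈ Finset.Icc (1:ℤ) (N:ℤ),
        Complex.exp (Complex.I * (2*(Real.pi:ℂ)*(τ:ℂ)*(k:ℂ)/(N:ℂ))) = 1 := by
      intro τ _
      have : Complex.I * (2*(Real.pi:ℂ)*(τ:ℂ)*(k:ℂ)/(N:ℂ)) = ((τ*m : ℤ):ℂ) * (2*(Real.pi:ℂ)*Complex.I) := by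
        push_cast [hm]
        field_simp
      rw [this, Complex.exp_int_mul_two_pi_mul_I]
    rw [Finset.sum_congr rfl this, Finset.sum_const, Int.card_Icc]
    simp
  · rw [if_neg hdvd]
    have hζ1 : ζ ≠ 1 := by
      intro h
      rw [hζ, Complex.exp_eq_one_iff] at h
      obtain ⟨n, hn⟩ := h
      apply hdvd
      refine ⟨n, ?_⟩
      have hpi : (Real.pi:ℂ) ≠ 0 := by exact_mod_cast Real.pi_ne_zero
      have h3 : (k:ℂ) = (n:ℂ) * (N:ℂ) := by
        field_simp at hn
        have h2 : (2:ℂ) * Real.pi * Complex.I ≠ 0 := by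
          simp [hpi, Complex.I_ne_zero]
        apply mul_left_cancel₀ h2
        linear_combination (2 * (Real.pi:ℂ) * Complex.I) * hn
      have h4 : k = n * (N:ℤ) := by exact_mod_cast h3
      rw [h4]; ring
    have hζN : ζ ^ (N:ℕ) = 1 := by
      rw [hζ, ← Complex.exp_nat_mul]
      have : (N:ℂ) * (Complex.I * (2*(Real.pi:ℂ)*(k:ℂ)/(N:ℂ))) = (k:ℂ) * (2*(Real.pi:ℂ)*Complex.I) := by
        field_simp
      rw [this]
      exact_mod_cast Complex.exp_int_mul_two_pi_mul_I k
    have hmap : Finset.Icc (1:ℤ) (N:ℤ) = Finset.map ⟨fun i : ℕ => (i:ℤ)+1, show Function.Injective (fun i : ℕ => (i:ℤ)+1) from fun a b h => by simpa using h⟩ (Finset.range N) := by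
      ext x
      simp only [Finset.mem_Icc, Finset.mem_map, Finset.mem_range, Function.Embedding.coeFn_mk]
      constructor
      · intro ⟨h1, h2⟩; exact ⟨(x-1).toNat, by omega, by omega⟩
      · rintro ⟨a, ha, rfl⟩; omega
    rw [Finset.sum_congr rfl (fun τ _ => hexp τ), hmap, Finset.sum_map]
    simp only [Function.Embedding.coeFn_mk]
    have hζ0 : ζ ≠ 0 := Complex.exp_ne_zero _
    have : ∀ i : ℕ, ζ ^ ((i:ℤ)+1) = ζ * ζ ^ i := by
      intro i
      rw [zpow_add₀ hζ0, zpow_natCast, zpow_one]; ring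
    rw [Finset.sum_congr rfl (fun i _ => this i), ← Finset.mul_sum, geom_sum_eq hζ1, hζN]
    simp

theorem stmt6 (N : ℕ) (hNeven : Even N) (hN : 4 ≤ N)
    (X : ℕ → ℝ) (hX : ∀ u, 0 ≤ X u) (J : ℤ → ℝ)
    (hJ : ∀ τ : ℤ, J τ = 2 * ∑ u ∈ Finset.range (N / 2), X u * (1 + Real.cos (2 * Real.pi * (τ : ℝ) * (u : ℝ) / (N : ℝ))))
    (u : ℕ) (hu1 : 1 ≤ u) (hu2 : u ≤ N / 2 - 1) :
    X u = ‖(1 / (N : ℂ)) * ∑ τ ∈ Finset.Icc (1 : ℤ) (N : ℤ),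
      (J τ : ℂ) * Complex.exp (Complex.I * ((2 * Real.pi * (τ : ℝ) * (u : ℝ) / (N : ℝ) : ℝ) : ℂ))‖ := by
  have hN0 : 0 < N := by omega
  have hNC : (N:ℂ) ≠ 0 := by exact_mod_cast Nat.cast_ne_zero.mpr hN0.ne'
  have hNhalf : N / 2 + N / 2 = N := by obtain ⟨r, hr⟩ := hNeven; omega
  set E : ℤ → ℤ → ℂ := fun τ k => Complex.exp (Complex.I * (2*(Real.pi:ℂ)*(τ:ℂ)*(k:ℂ)/(N:ℂ))) with hE
  have hmul : ∀ τ a b : ℤ, E τ a * E τ b = E τ (a+b) := by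
    intro τ a b
    rw [hE, ← Complex.exp_add]
    congr 1
    push_cast
    field_simp
  have hterm : ∀ τ : ℤ, (J τ : ℂ) * Complex.exp (Complex.I * ((2 * Real.pi * (τ : ℝ) * (u : ℝ) / (N : ℝ) : ℝ) : ℂ))
      = ∑ v ∈ Finset.range (N/2), (X v : ℂ) * (2 * E τ u + E τ ((u:ℤ)+(v:ℤ)) + E τ ((u:ℤ)-(v:ℤ))) := by
    intro τ
    rw [hJ τ]
    push_cast
    rw [Finset.mul_sum, Finset.sum_mul]
    refine Finset.sum_congr rfl fun v _ => ?_
    have hcos : Complex.cos (2*(Real.pi:ℂ)*(τ:ℂ)*(v:ℂ)/(N:ℂ)) = (E τ v + E τ (-(v:ℤ)))/2 := by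
      rw [Complex.cos, hE]
      push_cast
      congr 2 <;> (congr 1; ring)
    have h1 : Complex.exp (Complex.I * (2*(Real.pi:ℂ)*(τ:ℂ)*(u:ℂ)/(N:ℂ))) = E τ u := rfl
    calc 2 * ((X v:ℂ) * (1 + Complex.cos (2*(Real.pi:ℂ)*(τ:ℂ)*(v:ℂ)/(N:ℂ)))) * Complex.exp (Complex.I * (2*(Real.pi:ℂ)*(τ:ℂ)*(u:ℂ)/(N:ℂ)))
        = (X v:ℂ) * (2 * E τ u + E τ v * E τ u + E τ (-(v:ℤ)) * E τ u) := by rw [hcos, h1]; ring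
      _ = (X v:ℂ) * (2 * E τ u + E τ ((u:ℤ)+(v:ℤ)) + E τ ((u:ℤ)-(v:ℤ))) := by
          rw [hmul, hmul]
          congr 3 <;> ring_nf
  have hu' : u < N / 2 := by omega
  have hsum : ∑ τ ∈ Finset.Icc (1 : ℤ) (N : ℤ),
      (J τ : ℂ) * Complex.exp (Complex.I * ((2 * Real.pi * (τ : ℝ) * (u : ℝ) / (N : ℝ) : ℝ) : ℂ)) = (X u : ℂ) * N := by
    rw [Finset.sum_congr rfl fun τ _ => hterm τ, Finset.sum_comm]
    have : ∀ v ∈ Finset.range (N/2),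
        ∑ τ ∈ Finset.Icc (1:ℤ) (N:ℤ), (X v : ℂ) * (2 * E τ u + E τ ((u:ℤ)+(v:ℤ)) + E τ ((u:ℤ)-(v:ℤ)))
          = if v = u then (X u : ℂ) * N else 0 := by
      intro v hv
      rw [Finset.mem_range] at hv
      have S : ∀ k : ℤ, ∑ τ ∈ Finset.Icc (1:ℤ) (N:ℤ), E τ k = if (N:ℤ) ∣ k then (N:ℂ) else 0 :=
        fun k => key N hN0 k
      rw [← Finset.mul_sum]
      simp only [Finset.sum_add_distrib, ← Finset.mul_sum, S]
      have hu0 : ¬ (N:ℤ) ∣ (u:ℤ) := by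
        intro h
        have hle : (N:ℤ) ≤ (u:ℤ) := Int.le_of_dvd (by exact_mod_cast hu1) h
        omega
      have huv : ¬ (N:ℤ) ∣ ((u:ℤ)+(v:ℤ)) := by
        intro h
        have hle : (N:ℤ) ≤ (u:ℤ)+(v:ℤ) := Int.le_of_dvd (by positivity) h
        omega
      rw [if_neg hu0, if_neg huv]
      by_cases hvu : v = u
      · subst hvu
        simp [hNC]
      · have huv2 : ¬ (N:ℤ) ∣ ((u:ℤ)-(v:ℤ)) := by
          intro h
          have h0 : (u:ℤ) - (v:ℤ) = 0 :=
            Int.eq_zero_of_abs_lt_dvd h (by rw [abs_lt]; constructor <;> [omega; omega])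
          exact hvu (by omega)
        rw [if_neg huv2, if_neg hvu]
        ring
    rw [Finset.sum_congr rfl this, Finset.sum_ite_eq' _ u, if_pos (Finset.mem_range.mpr hu')]
  rw [hsum]
  have : (1 / (N : ℂ)) * ((X u : ℂ) * N) = (X u : ℂ) := by field_simp
  rw [this, Complex.norm_real, Real.norm_eq_abs]
  exact (_root_.abs_of_nonneg (hX u)).symm
end

section
/- Let N be an even positive integer with N ≥ 4, let X : ℕ → ℝ satisfy X(u) ≥ 0 for all u, and define J(τ) = 2 ∑_{u=0}^{N/2−1} X(u)(1 + cos(2πτu/N)) for integer τ. Then for every integer u with 1 ≤ u ≤ N/2 − 1, X(u) = | (1/N) ∑_{τ=0}^{N−1} J(τ) exp(i·2πτu/N) |, where |·| denotes the complex modulus. -/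
open Real Complex Finset

lemma gsum_aux (N : ℕ) (hN : 0 < N) (k : ℤ) :
    ∑ t ∈ Finset.range N, Complex.exp (2 * (Real.pi : ℂ) * Complex.I * (k : ℂ) * (t : ℂ) / (N : ℂ)) =
      if (N : ℤ) ∣ k then (N : ℂ) else 0 := by
  have hNc : (N : ℂ) ≠ 0 := Nat.cast_ne_zero.mpr hN.ne'
  have hpi : (Real.pi : ℂ) ≠ 0 := Complex.ofReal_ne_zero.mpr Real.pi_ne_zero
  set z : ℂ := Complex.exp (2 * (Real.pi : ℂ) * Complex.I * k / N) with hz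
  have hpow : ∀ t : ℕ, Complex.exp (2 * (Real.pi : ℂ) * Complex.I * (k : ℂ) * (t : ℂ) / (N : ℂ)) = z ^ t := by
    intro t
    rw [hz, ← Complex.exp_nat_mul]
    ring_nf
  simp only [hpow]
  by_cases hdvd : (N : ℤ) ∣ k
  · rw [if_pos hdvd]
    obtain ⟨m, hm⟩ := hdvd
    have hz1 : z = 1 := by
      rw [hz, hm]
      push_cast
      rw [show 2 * (Real.pi : ℂ) * Complex.I * ((N : ℂ) * (m : ℂ)) / (N : ℂ)
            = (m : ℂ) * (2 * (Real.pi : ℂ) * Complex.I) by field_simp]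
      exact Complex.exp_int_mul_two_pi_mul_I m
    simp [hz1]
  · rw [if_neg hdvd]
    have hz1 : z ≠ 1 := by
      intro h
      rw [hz, Complex.exp_eq_one_iff] at h
      obtain ⟨n, hn⟩ := h
      have hc : (2 : ℂ) * (Real.pi : ℂ) * Complex.I ≠ 0 :=
        mul_ne_zero (mul_ne_zero two_ne_zero hpi) Complex.I_ne_zero
      have hkc : (2 * (Real.pi : ℂ) * Complex.I) * (k : ℂ)
          = (2 * (Real.pi : ℂ) * Complex.I) * ((n : ℂ) * (N : ℂ)) := by
        field_simp at hn
        linear_combination (2 * (Real.pi : ℂ) * Complex.I) * hn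
      have hk : (k : ℂ) = (n : ℂ) * (N : ℂ) := mul_left_cancel₀ hc hkc
      have : k = n * N := by exact_mod_cast hk
      exact hdvd ⟨n, by rw [this]; ring⟩
    have hzN : z ^ N = 1 := by
      rw [hz, ← Complex.exp_nat_mul]
      rw [show (N : ℂ) * (2 * (Real.pi : ℂ) * Complex.I * k / N)
            = (k : ℂ) * (2 * (Real.pi : ℂ) * Complex.I) by field_simp]
      exact Complex.exp_int_mul_two_pi_mul_I k
    rw [geom_sum_eq hz1, hzN]
    simp

theorem stmt7 (N : ℕ) (hNeven : Even N) (hN : 4 ≤ N)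
    (X : ℕ → ℝ) (hX : ∀ u, 0 ≤ X u) (J : ℤ → ℝ)
    (hJ : ∀ τ : ℤ, J τ = 2 * ∑ u ∈ Finset.range (N / 2), X u * (1 + Real.cos (2 * Real.pi * (τ : ℝ) * (u : ℝ) / (N : ℝ))))
    (u : ℕ) (hu1 : 1 ≤ u) (hu2 : u ≤ N / 2 - 1) :
    X u = ‖((1 / (N : ℂ)) * ∑ τ ∈ Finset.Icc (0 : ℤ) ((N : ℤ) - 1),
      (J τ : ℂ) * Complex.exp (Complex.I * ((2 * Real.pi * (τ : ℝ) * (u : ℝ) / (N : ℝ) : ℝ) : ℂ)))‖ := by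
  have hN0 : 0 < N := by omega
  have hNc : (N : ℂ) ≠ 0 := Nat.cast_ne_zero.mpr hN0.ne'
  have hNmod : N % 2 = 0 := Nat.even_iff.mp hNeven
  obtain ⟨M, hM⟩ : ∃ M, N = 2 * M := ⟨N / 2, by omega⟩
  have hM2 : N / 2 = M := by omega
  have huM : u ≤ M - 1 := by omega
  have hMge : 2 ≤ M := by omega
  -- convert Icc sum to range sum
  have hmap : Finset.Icc (0 : ℤ) ((N : ℤ) - 1)
      = Finset.map ⟨((↑) : ℕ → ℤ), Nat.cast_injective⟩ (Finset.range N) := by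
    ext x
    simp only [Finset.mem_Icc, Finset.mem_map, Finset.mem_range, Function.Embedding.coeFn_mk]
    constructor
    · rintro ⟨h0, h1⟩; exact ⟨x.toNat, by omega, by omega⟩
    · rintro ⟨a, ha, rfl⟩; omega
  rw [hmap, Finset.sum_map]
  simp only [Function.Embedding.coeFn_mk]
  have key : ∑ t ∈ Finset.range N,
      (J (t : ℤ) : ℂ) * Complex.exp (Complex.I * ((2 * Real.pi * ((t : ℤ) : ℝ) * (u : ℝ) / (N : ℝ) : ℝ) : ℂ))
      = (N : ℂ) * (X u : ℂ) := by
    have hterm : ∀ t ∈ Finset.range N,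
        (J (t : ℤ) : ℂ) * Complex.exp (Complex.I * ((2 * Real.pi * ((t : ℤ) : ℝ) * (u : ℝ) / (N : ℝ) : ℝ) : ℂ))
        = ∑ v ∈ Finset.range M, (X v : ℂ) *
            (2 * Complex.exp (2 * (Real.pi : ℂ) * Complex.I * ((u : ℤ) : ℂ) * (t : ℂ) / (N : ℂ))
              + Complex.exp (2 * (Real.pi : ℂ) * Complex.I * (((u : ℤ) + (v : ℤ) : ℤ) : ℂ) * (t : ℂ) / (N : ℂ))
              + Complex.exp (2 * (Real.pi : ℂ) * Complex.I * (((u : ℤ) - (v : ℤ) : ℤ) : ℂ) * (t : ℂ) / (N : ℂ))) := by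
      intro t _
      rw [hJ, hM2]
      push_cast
      rw [Finset.mul_sum, Finset.sum_mul]
      apply Finset.sum_congr rfl
      intro v _
      have h1 : Complex.exp (2 * (Real.pi : ℂ) * Complex.I * (u : ℂ) * (t : ℂ) / (N : ℂ))
          = Complex.exp (Complex.I * (2 * (Real.pi : ℂ) * (t : ℂ) * (u : ℂ) / (N : ℂ))) := by
        congr 1; ring
      have h2 : Complex.exp (2 * (Real.pi : ℂ) * Complex.I * ((u : ℂ) + (v : ℂ)) * (t : ℂ) / (N : ℂ))
          = Complex.exp (2 * (Real.pi : ℂ) * (t : ℂ) * (v : ℂ) / (N : ℂ) * Complex.I)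
            * Complex.exp (Complex.I * (2 * (Real.pi : ℂ) * (t : ℂ) * (u : ℂ) / (N : ℂ))) := by
        rw [← Complex.exp_add]; congr 1; ring
      have h3 : Complex.exp (2 * (Real.pi : ℂ) * Complex.I * ((u : ℂ) - (v : ℂ)) * (t : ℂ) / (N : ℂ))
          = Complex.exp (-(2 * (Real.pi : ℂ) * (t : ℂ) * (v : ℂ) / (N : ℂ)) * Complex.I)
            * Complex.exp (Complex.I * (2 * (Real.pi : ℂ) * (t : ℂ) * (u : ℂ) / (N : ℂ))) := by
        rw [← Complex.exp_add]; congr 1; ring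
      rw [h1, h2, h3, Complex.cos]
      ring
    rw [Finset.sum_congr rfl hterm, Finset.sum_comm]
    have hinner : ∀ v ∈ Finset.range M,
        ∑ t ∈ Finset.range N, (X v : ℂ) *
            (2 * Complex.exp (2 * (Real.pi : ℂ) * Complex.I * ((u : ℤ) : ℂ) * (t : ℂ) / (N : ℂ))
              + Complex.exp (2 * (Real.pi : ℂ) * Complex.I * (((u : ℤ) + (v : ℤ) : ℤ) : ℂ) * (t : ℂ) / (N : ℂ))
              + Complex.exp (2 * (Real.pi : ℂ) * Complex.I * (((u : ℤ) - (v : ℤ) : ℤ) : ℂ) * (t : ℂ) / (N : ℂ)))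
        = if v = u then (N : ℂ) * (X u : ℂ) else 0 := by
      intro v hv
      rw [Finset.mem_range] at hv
      rw [← Finset.mul_sum, Finset.sum_add_distrib, Finset.sum_add_distrib, ← Finset.mul_sum]
      rw [gsum_aux N hN0 (u : ℤ), gsum_aux N hN0 ((u : ℤ) + (v : ℤ)), gsum_aux N hN0 ((u : ℤ) - (v : ℤ))]
      have h1 : ¬ ((N : ℤ) ∣ (u : ℤ)) := by
        rw [Int.natCast_dvd_natCast]
        intro h
        have := Nat.le_of_dvd (by omega) h
        omega
      have h2 : ¬ ((N : ℤ) ∣ ((u : ℤ) + (v : ℤ))) := by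
        rw [show ((u : ℤ) + (v : ℤ)) = ((u + v : ℕ) : ℤ) by push_cast; ring, Int.natCast_dvd_natCast]
        intro h
        have := Nat.le_of_dvd (by omega) h
        omega
      rw [if_neg h1, if_neg h2]
      by_cases hvu : v = u
      · subst hvu
        rw [if_pos (by simp), if_pos rfl]
        ring
      · have h3 : ¬ ((N : ℤ) ∣ ((u : ℤ) - (v : ℤ))) := by
          intro h
          have h0 : (u : ℤ) - (v : ℤ) = 0 :=
            Int.eq_zero_of_dvd_of_natAbs_lt_natAbs h (by simp [Int.natAbs_natCast]; omega)
          have : u = v := by omega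
          exact hvu this.symm
        rw [if_neg h3, if_neg hvu]
        ring
    rw [Finset.sum_congr rfl hinner, Finset.sum_ite_eq' (Finset.range M) u]
    rw [if_pos (Finset.mem_range.mpr (by omega))]
  rw [key]
  rw [show (1 / (N : ℂ)) * ((N : ℂ) * (X u : ℂ)) = ((X u : ℝ) : ℂ) by field_simp]
  rw [Complex.norm_real, Real.norm_eq_abs, _root_.abs_of_nonneg (hX u)]
end

section
/- Let N be an even positive integer with N ≥ 4, let X : ℕ → ℝ, and define J(τ) = 2 ∑_{u=0}^{N/2−1} X(u)(1 + cos(2πτu/N)) for integer τ (including negative τ). Then for every integer u with 1 ≤ u ≤ N/2 − 1, X(u) = Re( (1/N) ∑_{τ=−N/2}^{N/2−1} J(τ) exp(i·2πτu/N) ). -/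
open Real Complex Finset

lemma key2 (a b : ℂ) : 2 * ((1 + Complex.cos b) * Complex.exp (Complex.I * a))
    = 2 * Complex.exp (Complex.I * a) + Complex.exp (Complex.I * (a + b))
      + Complex.exp (Complex.I * (a - b)) := by
  rw [show Complex.I * (a + b) = Complex.I * a + b * Complex.I by ring,
    show Complex.I * (a - b) = Complex.I * a + -b * Complex.I by ring,
    Complex.exp_add, Complex.exp_add]
  simp only [Complex.cos]
  ring


lemma sum_exp_Icc (N : ℕ) (hNeven : Even N) (hN : 0 < N) (k : ℤ) :
    ∑ τ ∈ Finset.Icc (-((N:ℤ)/2)) ((N:ℤ)/2 - 1),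
      Complex.exp (2 * Real.pi * Complex.I * (τ:ℂ) * (k:ℂ) / (N:ℂ))
    = if (N:ℤ) ∣ k then (N:ℂ) else 0 := by
  obtain ⟨M, hM⟩ := hNeven
  have hMN : N = 2 * M := by omega
  have hM2 : ((N:ℤ)/2) = (M:ℤ) := by omega
  have hN0 : (N:ℂ) ≠ 0 := Nat.cast_ne_zero.mpr hN.ne'
  have hcard : (Finset.Icc (-((N:ℤ)/2)) ((N:ℤ)/2 - 1)).card = N := by
    rw [Int.card_Icc]; omega
  set ζ : ℂ := Complex.exp (2 * Real.pi * Complex.I * (k:ℂ) / (N:ℂ)) with hζ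
  have hterm : ∀ τ : ℤ, Complex.exp (2 * Real.pi * Complex.I * (τ:ℂ) * (k:ℂ) / (N:ℂ)) = ζ ^ τ := by
    intro τ
    rw [hζ, ← Complex.exp_int_mul]
    ring_nf
  have himg : Finset.Icc (-((N:ℤ)/2)) ((N:ℤ)/2 - 1)
      = Finset.image (fun j : ℕ => (j:ℤ) - M) (Finset.range N) := by
    ext τ
    simp only [Finset.mem_image, Finset.mem_Icc, Finset.mem_range, hM2]
    constructor
    · rintro ⟨h1, h2⟩
      exact ⟨(τ + M).toNat, by omega, by omega⟩
    · rintro ⟨j, hj, rfl⟩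
      omega
  have hζN : ζ ^ (N:ℕ) = 1 := by
    rw [hζ, ← Complex.exp_nat_mul]
    have : (N:ℂ) * (2 * Real.pi * Complex.I * (k:ℂ) / (N:ℂ)) = (k:ℂ) * (2 * Real.pi * Complex.I) := by
      field_simp
    rw [this]
    exact_mod_cast Complex.exp_int_mul_two_pi_mul_I k
  by_cases hdvd : (N:ℤ) ∣ k
  · obtain ⟨m, rfl⟩ := hdvd
    rw [if_pos (dvd_mul_right (N:ℤ) m)]
    have hone : ∀ τ ∈ Finset.Icc (-((N:ℤ)/2)) ((N:ℤ)/2 - 1),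
        Complex.exp (2 * Real.pi * Complex.I * (τ:ℂ) * ((((N:ℤ) * m :ℤ)):ℂ) / (N:ℂ)) = 1 := by
      intro τ _
      have : 2 * Real.pi * Complex.I * (τ:ℂ) * ((((N:ℤ) * m :ℤ)):ℂ) / (N:ℂ)
          = ((τ * m : ℤ):ℂ) * (2 * Real.pi * Complex.I) := by
        push_cast
        field_simp
      rw [this]
      exact_mod_cast Complex.exp_int_mul_two_pi_mul_I (τ * m)
    rw [Finset.sum_congr rfl hone, Finset.sum_const, hcard, nsmul_eq_mul, mul_one]
  · simp only [if_neg hdvd]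
    have hζ1 : ζ ≠ 1 := by
      intro h
      rw [hζ, Complex.exp_eq_one_iff] at h
      obtain ⟨n, hn⟩ := h
      apply hdvd
      refine ⟨n, ?_⟩
      have hpi : (2 * Real.pi * Complex.I : ℂ) ≠ 0 := by
        simp [Real.pi_ne_zero, Complex.I_ne_zero]
      field_simp at hn
      have h2 : (2 * Real.pi * Complex.I : ℂ) * (k:ℂ) = (2 * Real.pi * Complex.I) * ((N:ℂ) * n) := by
        linear_combination (2 * Real.pi * Complex.I) * hn
      exact_mod_cast mul_left_cancel₀ hpi h2
    rw [Finset.sum_congr rfl (fun τ _ => hterm τ), himg,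
      Finset.sum_image (by intro a _ b _ h; have h' : (a:ℤ) - M = (b:ℤ) - M := h; omega)]
    have hrw : ∀ j ∈ Finset.range N, ζ ^ ((j:ℤ) - M) = ζ ^ (-(M:ℤ)) * ζ ^ j := by
      intro j _
      rw [sub_eq_add_neg, zpow_add₀ (Complex.exp_ne_zero _), zpow_natCast, mul_comm]
    rw [Finset.sum_congr rfl hrw, ← Finset.mul_sum, geom_sum_eq hζ1, hζN]
    simp

theorem stmt10 (N : ℕ) (hNeven : Even N) (hN : 4 ≤ N)
    (X : ℕ → ℝ) (J : ℤ → ℝ)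
    (hJ : ∀ τ : ℤ, J τ = 2 * ∑ u ∈ Finset.range (N / 2), X u * (1 + Real.cos (2 * Real.pi * (τ : ℝ) * (u : ℝ) / (N : ℝ))))
    (u : ℕ) (hu1 : 1 ≤ u) (hu2 : u ≤ N / 2 - 1) :
    X u = ((1 / (N : ℂ)) * ∑ τ ∈ Finset.Icc (-((N : ℤ) / 2)) ((N : ℤ) / 2 - 1),
      (J τ : ℂ) * Complex.exp (Complex.I * ((2 * Real.pi * (τ : ℝ) * (u : ℝ) / (N : ℝ) : ℝ) : ℂ))).re := by
  have hN0 : (0:ℕ) < N := by omega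
  have hNC : (N:ℂ) ≠ 0 := Nat.cast_ne_zero.mpr hN0.ne'
  set E : ℤ → ℤ → ℂ := fun τ k =>
    Complex.exp (2 * Real.pi * Complex.I * (τ:ℂ) * (k:ℂ) / (N:ℂ)) with hE
  set S : ℤ → ℂ := fun k => ∑ τ ∈ Finset.Icc (-((N:ℤ)/2)) ((N:ℤ)/2 - 1), E τ k with hS
  have hSval : ∀ k : ℤ, S k = if (N:ℤ) ∣ k then (N:ℂ) else 0 := fun k =>
    sum_exp_Icc N hNeven hN0 k
  -- pointwise rewriting of each term
  have step : ∀ τ : ℤ,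
      (J τ : ℂ) * Complex.exp (Complex.I * ((2 * Real.pi * (τ : ℝ) * (u : ℝ) / (N : ℝ) : ℝ) : ℂ))
      = ∑ v ∈ Finset.range (N / 2),
          (X v : ℂ) * (2 * E τ u + E τ ((u:ℤ) + v) + E τ ((u:ℤ) - v)) := by
    intro τ
    rw [hJ τ]
    push_cast
    rw [mul_comm (2:ℂ) _, mul_assoc, Finset.sum_mul]
    refine Finset.sum_congr rfl fun v hv => ?_
    rw [show (X v:ℂ) * (1 + Complex.cos (2*(π:ℂ)*(τ:ℂ)*(v:ℂ)/(N:ℂ))) *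
          (2 * Complex.exp (Complex.I * (2*(π:ℂ)*(τ:ℂ)*(u:ℂ)/(N:ℂ))))
        = (X v:ℂ) * (2 * ((1 + Complex.cos (2*(π:ℂ)*(τ:ℂ)*(v:ℂ)/(N:ℂ))) *
          Complex.exp (Complex.I * (2*(π:ℂ)*(τ:ℂ)*(u:ℂ)/(N:ℂ))))) from by ring,
      key2]
    have e1 : Complex.exp (Complex.I * (2*(π:ℂ)*(τ:ℂ)*(u:ℂ)/(N:ℂ))) = E τ (u:ℤ) := by
      rw [hE]; push_cast; ring_nf
    have e2 : Complex.exp (Complex.I * (2*(π:ℂ)*(τ:ℂ)*(u:ℂ)/(N:ℂ) + 2*(π:ℂ)*(τ:ℂ)*(v:ℂ)/(N:ℂ)))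
        = E τ ((u:ℤ) + v) := by
      rw [hE]; push_cast; ring_nf
    have e3 : Complex.exp (Complex.I * (2*(π:ℂ)*(τ:ℂ)*(u:ℂ)/(N:ℂ) - 2*(π:ℂ)*(τ:ℂ)*(v:ℂ)/(N:ℂ)))
        = E τ ((u:ℤ) - v) := by
      rw [hE]; push_cast; ring_nf
    rw [e1, e2, e3]
  -- divisibility facts
  have hu' : ¬ (N:ℤ) ∣ (u:ℤ) := by
    intro hd
    have := Int.le_of_dvd (by exact_mod_cast hu1) hd
    omega
  have huv : ∀ v : ℕ, v < N/2 → ¬ (N:ℤ) ∣ ((u:ℤ) + v) := by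
    intro v hv hd
    have := Int.le_of_dvd (by omega) hd
    omega
  have huv2 : ∀ v : ℕ, v < N/2 → v ≠ u → ¬ (N:ℤ) ∣ ((u:ℤ) - v) := by
    intro v hv hne hd
    obtain ⟨c, hc⟩ := hd
    rcases lt_trichotomy c 0 with h | h | h
    · have h1 : (N:ℤ) * c ≤ (N:ℤ) * (-1) :=
        mul_le_mul_of_nonneg_left (by omega) (by omega)
      have h2 : (u:ℤ) - v ≤ -(N:ℤ) := by linarith
      omega
    · subst h; omega
    · have h1 : (N:ℤ) * 1 ≤ (N:ℤ) * c :=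
        mul_le_mul_of_nonneg_left (by omega) (by omega)
      have h2 : ((N:ℤ)) ≤ (u:ℤ) - v := by linarith
      omega
  -- the main sum evaluation
  have hsum : ∑ τ ∈ Finset.Icc (-((N : ℤ) / 2)) ((N : ℤ) / 2 - 1),
      (J τ : ℂ) * Complex.exp (Complex.I * ((2 * Real.pi * (τ : ℝ) * (u : ℝ) / (N : ℝ) : ℝ) : ℂ))
      = (X u : ℂ) * N := by
    rw [Finset.sum_congr rfl (fun τ _ => step τ), Finset.sum_comm]
    have h1 : ∀ v ∈ Finset.range (N/2),
        ∑ τ ∈ Finset.Icc (-((N:ℤ)/2)) ((N:ℤ)/2 - 1),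
          (X v : ℂ) * (2 * E τ u + E τ ((u:ℤ) + v) + E τ ((u:ℤ) - v))
        = (X v : ℂ) * (2 * S (u:ℤ) + S ((u:ℤ) + v) + S ((u:ℤ) - v)) := by
      intro v _
      rw [← Finset.mul_sum]
      congr 1
      rw [Finset.sum_add_distrib, Finset.sum_add_distrib, ← Finset.mul_sum]
    rw [Finset.sum_congr rfl h1]
    have h2 : ∀ v ∈ Finset.range (N/2),
        (X v : ℂ) * (2 * S (u:ℤ) + S ((u:ℤ) + v) + S ((u:ℤ) - v))
        = if v = u then (X u : ℂ) * N else 0 := by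
      intro v hv
      simp only [Finset.mem_range] at hv
      rw [hSval, hSval, hSval, if_neg hu', if_neg (huv v hv)]
      by_cases h : v = u
      · subst h
        rw [if_pos (by simp), if_pos rfl]
        ring
      · rw [if_neg (huv2 v hv h), if_neg h]
        ring
    rw [Finset.sum_congr rfl h2, Finset.sum_ite_eq' (Finset.range (N/2)) u
      (fun _ => (X u : ℂ) * N), if_pos (Finset.mem_range.mpr (by omega))]
  rw [hsum]
  have : (1/(N:ℂ)) * ((X u : ℂ) * N) = ((X u : ℝ) : ℂ) := by
    field_simp
  rw [this, Complex.ofReal_re]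
end

section
/- Let N be an even positive integer with N ≥ 4, let R be a real number, let A : ℕ → ℂ, and define J(τ) = ∑_{u=0}^{N/2−1} |A(u) + R·exp(i·2πτu/N)|² for integer τ. Then for every integer u with 1 ≤ u ≤ N/2 − 1, R·A(u) = (1/N) ∑_{τ=1}^{N} J(τ) exp(i·2πτu/N). -/
open Real Complex Finset

theorem stmt13 (N : ℕ) (hNeven : Even N) (hN : 4 ≤ N)
    (R : ℝ) (A : ℕ → ℂ) (J : ℤ → ℝ)
    (hJ : ∀ τ : ℤ, J τ = ∑ u ∈ Finset.range (N / 2), (‖A u + (R : ℂ) * Complex.exp (Complex.I * ((2 * Real.pi * (τ : ℝ) * (u : ℝ) / (N : ℝ) : ℝ) : ℂ))‖) ^ 2)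
    (u : ℕ) (hu1 : 1 ≤ u) (hu2 : u ≤ N / 2 - 1) :
    (R : ℂ) * A u = (1 / (N : ℂ)) * ∑ τ ∈ Finset.Icc (1 : ℤ) (N : ℤ),
      (J τ : ℂ) * Complex.exp (Complex.I * ((2 * Real.pi * (τ : ℝ) * (u : ℝ) / (N : ℝ) : ℝ) : ℂ)) := by
  have hN0 : N ≠ 0 := by omega
  have hNc0 : (N : ℂ) ≠ 0 := Nat.cast_ne_zero.mpr hN0
  have hNr0 : (N : ℝ) ≠ 0 := Nat.cast_ne_zero.mpr hN0
  set ζ : ℂ := Complex.exp (2 * Real.pi * Complex.I / N) with hζ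
  have hprim : IsPrimitiveRoot ζ N := Complex.isPrimitiveRoot_exp N hN0
  have hz0 : ζ ≠ 0 := Complex.exp_ne_zero _
  -- express the exponentials as zpow of ζ
  have hexp : ∀ (τ : ℤ) (v : ℕ),
      Complex.exp (Complex.I * ((2 * Real.pi * (τ : ℝ) * (v : ℝ) / (N : ℝ) : ℝ) : ℂ)) = ζ ^ (τ * (v : ℤ)) := by
    intro τ v
    rw [hζ, ← Complex.exp_int_mul]
    congr 1
    push_cast
    field_simp
  -- conjugation
  have hconjζ : (starRingEnd ℂ) ζ = ζ⁻¹ := by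
    rw [hζ, ← Complex.exp_conj, ← Complex.exp_neg]
    congr 1
    simp only [map_div₀, map_mul, Complex.conj_I, Complex.conj_ofReal, map_ofNat, map_natCast]
    ring
  have hconj : ∀ m : ℤ, (starRingEnd ℂ) (ζ ^ m) = ζ ^ (-m) := by
    intro m
    rw [map_zpow₀, hconjζ, inv_zpow, ← zpow_neg]
  -- orthogonality sum
  have hsum : ∀ m : ℤ, ∑ τ ∈ Finset.Icc (1:ℤ) (N:ℤ), ζ ^ (τ * m)
      = if (N:ℤ) ∣ m then (N:ℂ) else 0 := by
    intro m
    have hre : ∑ τ ∈ Finset.Icc (1:ℤ) (N:ℤ), ζ ^ (τ * m)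
        = ∑ t ∈ Finset.range N, (ζ ^ m) ^ (t + 1) := by
      refine Finset.sum_nbij' (fun τ => (τ - 1).toNat) (fun t => (t:ℤ) + 1) ?_ ?_ ?_ ?_ ?_
      · intro a ha
        simp only [Finset.mem_Icc] at ha
        simp only [Finset.mem_range]
        omega
      · intro a ha
        simp only [Finset.mem_range] at ha
        simp only [Finset.mem_Icc]
        omega
      · intro a ha
        simp only [Finset.mem_Icc] at ha
        omega
      · intro a _
        omega
      · intro a ha
        simp only [Finset.mem_Icc] at ha
        rw [← zpow_natCast (ζ ^ m), ← zpow_mul]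
        congr 1
        have h1 : (((a - 1).toNat : ℕ) : ℤ) = a - 1 := Int.toNat_of_nonneg (by omega)
        push_cast [h1]
        ring
    rw [hre]
    by_cases hdvd : (N:ℤ) ∣ m
    · have h1 : ζ ^ m = 1 := (hprim.zpow_eq_one_iff_dvd m).mpr hdvd
      simp [h1, hdvd]
    · have hx1 : ζ ^ m ≠ 1 := fun h => hdvd ((hprim.zpow_eq_one_iff_dvd m).mp h)
      have hxN : (ζ ^ m) ^ N = 1 := by
        rw [← zpow_natCast, ← zpow_mul, mul_comm, zpow_mul, zpow_natCast, hprim.pow_eq_one,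
          one_zpow]
      rw [if_neg hdvd]
      have hsplit : ∑ t ∈ Finset.range N, (ζ ^ m) ^ (t + 1)
          = (ζ ^ m) * ∑ t ∈ Finset.range N, (ζ ^ m) ^ t := by
        rw [Finset.mul_sum]
        exact Finset.sum_congr rfl fun t _ => by rw [pow_succ]; ring
      rw [hsplit, geom_sum_eq hx1, hxN]
      simp
  -- J as complex
  have hJc : ∀ τ : ℤ, (J τ : ℂ) = ∑ v ∈ Finset.range (N/2),
      (A v + (R:ℂ) * ζ ^ (τ * (v:ℤ))) * ((starRingEnd ℂ) (A v) + (R:ℂ) * ζ ^ (-(τ * (v:ℤ)))) := by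
    intro τ
    have habs : ∀ w : ℂ, ((‖w‖ : ℂ)) ^ 2 = w * (starRingEnd ℂ) w := by
      intro w
      rw [Complex.mul_conj]
      norm_cast
      exact Complex.sq_norm w
    rw [hJ τ, Complex.ofReal_sum]
    refine Finset.sum_congr rfl fun v _ => ?_
    rw [Complex.ofReal_pow, habs, hexp]
    congr 1
    rw [map_add, map_mul, hconj, Complex.conj_ofReal]
  -- algebraic expansion of each summand
  have key : ∀ (τ : ℤ) (v : ℕ),
      (A v + (R:ℂ) * ζ ^ (τ * (v:ℤ))) * ((starRingEnd ℂ) (A v) + (R:ℂ) * ζ ^ (-(τ * (v:ℤ)))) * ζ ^ (τ * (u:ℤ))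
      = (A v * (starRingEnd ℂ) (A v) + (R:ℂ)^2) * ζ ^ (τ * (u:ℤ))
        + (R:ℂ) * A v * ζ ^ (τ * ((u:ℤ) - (v:ℤ)))
        + (R:ℂ) * (starRingEnd ℂ) (A v) * ζ ^ (τ * ((u:ℤ) + (v:ℤ))) := by
    intro τ v
    have e1 : ζ ^ (τ * ((u:ℤ) - (v:ℤ))) = ζ ^ (τ * (u:ℤ)) * (ζ ^ (τ * (v:ℤ)))⁻¹ := by
      rw [← zpow_neg, ← zpow_add₀ hz0]
      ring_nf
    have e2 : ζ ^ (τ * ((u:ℤ) + (v:ℤ))) = ζ ^ (τ * (u:ℤ)) * ζ ^ (τ * (v:ℤ)) := by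
      rw [← zpow_add₀ hz0]
      ring_nf
    have e3 : ζ ^ (-(τ * (v:ℤ))) = (ζ ^ (τ * (v:ℤ)))⁻¹ := by rw [zpow_neg]
    rw [e1, e2, e3]
    have hb : ζ ^ (τ * (v:ℤ)) ≠ 0 := zpow_ne_zero _ hz0
    field_simp
    ring
  -- inner τ-sum for each v
  have hτsum : ∀ v ∈ Finset.range (N/2),
      (∑ τ ∈ Finset.Icc (1:ℤ) (N:ℤ),
        (A v + (R:ℂ) * ζ ^ (τ * (v:ℤ))) * ((starRingEnd ℂ) (A v) + (R:ℂ) * ζ ^ (-(τ * (v:ℤ)))) * ζ ^ (τ * (u:ℤ)))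
      = if v = u then (N:ℂ) * ((R:ℂ) * A u) else 0 := by
    intro v hv
    simp only [Finset.mem_range] at hv
    have huN : u < N / 2 := by omega
    simp only [key]
    rw [Finset.sum_add_distrib, Finset.sum_add_distrib, ← Finset.mul_sum, ← Finset.mul_sum,
      ← Finset.mul_sum, hsum, hsum, hsum]
    have h1 : ¬ ((N:ℤ) ∣ (u:ℤ)) := by
      intro h
      have := Int.le_of_dvd (by exact_mod_cast hu1) h
      omega
    have h2 : ¬ ((N:ℤ) ∣ ((u:ℤ) + (v:ℤ))) := by
      intro h
      have := Int.le_of_dvd (by omega) h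
      omega
    by_cases hvu : v = u
    · subst hvu
      rw [if_pos rfl, if_neg h1, if_neg h2, if_pos (by simp)]
      ring
    · have h3 : ¬ ((N:ℤ) ∣ ((u:ℤ) - (v:ℤ))) := by
        intro h
        have := Int.eq_zero_of_abs_lt_dvd h (by rw [abs_sub_lt_iff]; constructor <;> push_cast <;> omega)
        omega
      rw [if_neg h1, if_neg h2, if_neg h3, if_neg hvu]
      ring
  -- main computation
  have hmain : ∑ τ ∈ Finset.Icc (1 : ℤ) (N : ℤ),
      (J τ : ℂ) * Complex.exp (Complex.I * ((2 * Real.pi * (τ : ℝ) * (u : ℝ) / (N : ℝ) : ℝ) : ℂ))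
      = (N:ℂ) * ((R:ℂ) * A u) := by
    calc ∑ τ ∈ Finset.Icc (1 : ℤ) (N : ℤ),
        (J τ : ℂ) * Complex.exp (Complex.I * ((2 * Real.pi * (τ : ℝ) * (u : ℝ) / (N : ℝ) : ℝ) : ℂ))
        = ∑ τ ∈ Finset.Icc (1:ℤ) (N:ℤ), ∑ v ∈ Finset.range (N/2),
            (A v + (R:ℂ) * ζ ^ (τ * (v:ℤ))) * ((starRingEnd ℂ) (A v) + (R:ℂ) * ζ ^ (-(τ * (v:ℤ)))) * ζ ^ (τ * (u:ℤ)) := by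
          refine Finset.sum_congr rfl fun τ _ => ?_
          rw [hexp, hJc, Finset.sum_mul]
      _ = ∑ v ∈ Finset.range (N/2), ∑ τ ∈ Finset.Icc (1:ℤ) (N:ℤ),
            (A v + (R:ℂ) * ζ ^ (τ * (v:ℤ))) * ((starRingEnd ℂ) (A v) + (R:ℂ) * ζ ^ (-(τ * (v:ℤ)))) * ζ ^ (τ * (u:ℤ)) :=
          Finset.sum_comm
      _ = ∑ v ∈ Finset.range (N/2), if v = u then (N:ℂ) * ((R:ℂ) * A u) else 0 :=
          Finset.sum_congr rfl hτsum
      _ = (N:ℂ) * ((R:ℂ) * A u) := by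
          rw [Finset.sum_ite_eq' (Finset.range (N/2)) u fun _ => (N:ℂ) * ((R:ℂ) * A u)]
          rw [if_pos (Finset.mem_range.mpr (by omega))]
  rw [hmain]
  field_simp
end

section
/- Let N be an even positive integer with N ≥ 4, let R be a real number, let A : ℕ → ℂ, and define J(τ) = ∑_{u=0}^{N/2−1} |A(u) + R·exp(i·2πτu/N)|² for integer τ. Then |A(0) + R|² = (1/N) ∑_{τ=1}^{N} J(τ) − ∑_{u₁=1}^{N/2−1} |A(u₁)|² − (N/2 − 1)·R². -/
open Real Complex Finset

-- Icc ℤ to range conversion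
lemma icc_to_range (N : ℕ) (f : ℤ → ℂ) :
    ∑ τ ∈ Finset.Icc (1:ℤ) (N:ℤ), f τ = ∑ k ∈ Finset.range N, f ((k:ℤ)+1) := by
  have h : Finset.Icc (1:ℤ) (N:ℤ) =
      Finset.map ⟨fun k : ℕ => (k:ℤ)+1, by intro a b hab; simp only at hab; omega⟩ (Finset.range N) := by
    ext x
    simp only [Finset.mem_Icc, Finset.mem_map, Finset.mem_range, Function.Embedding.coeFn_mk]
    constructor
    · intro hx; exact ⟨(x-1).toNat, by omega, by show ((x-1).toNat : ℤ) + 1 = x; omega⟩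
    · rintro ⟨a, ha, rfl⟩; show (1:ℤ) ≤ (a:ℤ) + 1 ∧ (a:ℤ) + 1 ≤ N; omega
  rw [h, Finset.sum_map]
  rfl

-- geometric exponential sum vanishes
lemma expsum (N : ℕ) (hN : 0 < N) (u : ℕ) (hu1 : 1 ≤ u) (hu : u < N) :
    ∑ τ ∈ Finset.Icc (1:ℤ) (N:ℤ),
      Complex.exp (Complex.I * ((2 * Real.pi * (τ:ℝ) * (u:ℝ) / (N:ℝ) : ℝ) : ℂ)) = 0 := by
  rw [icc_to_range]
  set z : ℂ := Complex.exp (Complex.I * ((2 * Real.pi * (u:ℝ) / (N:ℝ) : ℝ) : ℂ)) with hz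
  have hterm : (∑ k ∈ Finset.range N,
      Complex.exp (Complex.I * ((2 * Real.pi * ((((k:ℤ)+1):ℤ):ℝ) * (u:ℝ) / (N:ℝ) : ℝ) : ℂ)))
      = ∑ k ∈ Finset.range N, z ^ (k+1) :=
    Finset.sum_congr rfl fun k _ => by
      rw [hz, ← Complex.exp_nat_mul]; congr 1; push_cast; ring
  rw [hterm]
  have hzN : z ^ N = 1 := by
    rw [hz, ← Complex.exp_nat_mul]
    have : (N:ℂ) * (Complex.I * ((2 * Real.pi * (u:ℝ) / (N:ℝ) : ℝ) : ℂ)) = (u:ℤ) * (2 * Real.pi * Complex.I) := by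
      have hN0 : (N:ℂ) ≠ 0 := Nat.cast_ne_zero.mpr hN.ne'
      push_cast
      field_simp
    rw [this, Complex.exp_int_mul_two_pi_mul_I]
  have hz1 : z ≠ 1 := by
    rw [hz, Ne, Complex.exp_eq_one_iff]
    push_neg
    intro n hn
    have him : (2 * Real.pi * (u:ℝ) / (N:ℝ)) = n * (2 * Real.pi) := by
      have := congrArg Complex.im hn
      simpa using this
    have hπ : 0 < Real.pi := Real.pi_pos
    have h1 : 0 < 2 * Real.pi * (u:ℝ) / (N:ℝ) := by
      apply div_pos
      · positivity
      · exact_mod_cast hN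
    have h2 : 2 * Real.pi * (u:ℝ) / (N:ℝ) < 2 * Real.pi := by
      rw [div_lt_iff₀ (by exact_mod_cast hN : (0:ℝ) < N)]
      have : (u:ℝ) < N := by exact_mod_cast hu
      nlinarith
    rw [him] at h1 h2
    have hn1 : (1:ℝ) ≤ n := by
      have : (0:ℝ) < n := by nlinarith
      have : (0:ℤ) < n := by exact_mod_cast this
      exact_mod_cast this
    nlinarith
  have : ∑ k ∈ Finset.range N, z ^ (k+1) = (∑ k ∈ Finset.range N, z ^ k) * z := by
    rw [Finset.sum_mul]
    exact Finset.sum_congr rfl fun k _ => by ring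
  rw [this, geom_sum_eq hz1, hzN]
  simp

lemma card_icc (N : ℕ) : (Finset.Icc (1:ℤ) (N:ℤ)).card = N := by
  rw [Int.card_Icc]; omega

lemma tauSum14 (N : ℕ) (hN : 0 < N) (R : ℝ) (a : ℂ) (u : ℕ) (hu1 : 1 ≤ u) (hu : u < N)
    (hS : ∑ τ ∈ Finset.Icc (1:ℤ) (N:ℤ),
      Complex.exp (Complex.I * ((2 * Real.pi * (τ:ℝ) * (u:ℝ) / (N:ℝ) : ℝ) : ℂ)) = 0) :
    ∑ τ ∈ Finset.Icc (1:ℤ) (N:ℤ),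
      (Norm.norm (a + (R:ℂ) * Complex.exp (Complex.I * ((2 * Real.pi * (τ:ℝ) * (u:ℝ) / (N:ℝ) : ℝ) : ℂ))))^2
    = N * ((Norm.norm a)^2 + R^2) := by
  have habs : ∀ τ : ℤ, Norm.norm (Complex.exp (Complex.I * ((2 * Real.pi * (τ:ℝ) * (u:ℝ) / (N:ℝ) : ℝ) : ℂ))) = 1 := by
    intro τ; rw [Complex.norm_exp]; simp
  have hterm : ∀ τ : ℤ,
      (Norm.norm (a + (R:ℂ) * Complex.exp (Complex.I * ((2 * Real.pi * (τ:ℝ) * (u:ℝ) / (N:ℝ) : ℝ) : ℂ))))^2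
      = ((Norm.norm a)^2 + R^2) +
        2 * ((a * (R:ℂ) * (starRingEnd ℂ) (Complex.exp (Complex.I * ((2 * Real.pi * (τ:ℝ) * (u:ℝ) / (N:ℝ) : ℝ) : ℂ)))).re) := by
    intro τ
    have h1 : Complex.normSq (Complex.exp (Complex.I * ((2 * Real.pi * (τ:ℝ) * (u:ℝ) / (N:ℝ) : ℝ) : ℂ))) = 1 := by
      rw [Complex.normSq_eq_norm_sq, habs τ]; norm_num
    rw [Complex.sq_norm, Complex.normSq_add, Complex.normSq_mul, Complex.normSq_ofReal, h1,
      map_mul, Complex.conj_ofReal, ← Complex.sq_norm]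
    ring_nf
  rw [Finset.sum_congr rfl fun τ _ => hterm τ, Finset.sum_add_distrib, Finset.sum_const, card_icc,
    nsmul_eq_mul]
  have : ∑ τ ∈ Finset.Icc (1:ℤ) (N:ℤ),
      2 * ((a * (R:ℂ) * (starRingEnd ℂ) (Complex.exp (Complex.I * ((2 * Real.pi * (τ:ℝ) * (u:ℝ) / (N:ℝ) : ℝ) : ℂ)))).re) = 0 := by
    rw [← Finset.mul_sum, ← Complex.re_sum, ← Finset.mul_sum, ← map_sum, hS]
    simp
  rw [this]; ring

theorem stmt14 (N : ℕ) (hNeven : Even N) (hN : 4 ≤ N)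
    (R : ℝ) (A : ℕ → ℂ) (J : ℤ → ℝ)
    (hJ : ∀ τ : ℤ, J τ = ∑ u ∈ Finset.range (N / 2), (Norm.norm (A u + (R : ℂ) * Complex.exp (Complex.I * ((2 * Real.pi * (τ : ℝ) * (u : ℝ) / (N : ℝ) : ℝ) : ℂ)))) ^ 2) :
    (Norm.norm (A 0 + (R : ℂ))) ^ 2 = (1 / (N : ℝ)) * ∑ τ ∈ Finset.Icc (1 : ℤ) (N : ℤ), J τ - ∑ u₁ ∈ Finset.Icc 1 (N / 2 - 1), (Norm.norm (A u₁)) ^ 2 - ((N : ℝ) / 2 - 1) * R ^ 2 := by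
  have hN0 : 0 < N := by omega
  have hswap : ∑ τ ∈ Finset.Icc (1:ℤ) (N:ℤ), J τ
      = ∑ u ∈ Finset.range (N / 2), ∑ τ ∈ Finset.Icc (1:ℤ) (N:ℤ),
        (Norm.norm (A u + (R : ℂ) * Complex.exp (Complex.I * ((2 * Real.pi * (τ : ℝ) * (u : ℝ) / (N : ℝ) : ℝ) : ℂ)))) ^ 2 := by
    simp only [hJ]
    rw [Finset.sum_comm]
  have hins : Finset.range (N / 2) = insert 0 (Finset.Icc 1 (N / 2 - 1)) := by
    ext x; simp [Finset.mem_range, Finset.mem_Icc]; omega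
  have h0 : ∑ τ ∈ Finset.Icc (1:ℤ) (N:ℤ),
      (Norm.norm (A 0 + (R : ℂ) * Complex.exp (Complex.I * ((2 * Real.pi * (τ : ℝ) * ((0:ℕ) : ℝ) / (N : ℝ) : ℝ) : ℂ)))) ^ 2
      = (N : ℝ) * (Norm.norm (A 0 + (R : ℂ))) ^ 2 := by
    have : ∀ τ : ℤ, (Norm.norm (A 0 + (R : ℂ) * Complex.exp (Complex.I * ((2 * Real.pi * (τ : ℝ) * ((0:ℕ) : ℝ) / (N : ℝ) : ℝ) : ℂ)))) ^ 2
        = (Norm.norm (A 0 + (R : ℂ))) ^ 2 := by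
      intro τ; norm_num
    rw [Finset.sum_congr rfl fun τ _ => this τ, Finset.sum_const, card_icc, nsmul_eq_mul]
  have hrest : ∑ u ∈ Finset.Icc 1 (N / 2 - 1), ∑ τ ∈ Finset.Icc (1:ℤ) (N:ℤ),
      (Norm.norm (A u + (R : ℂ) * Complex.exp (Complex.I * ((2 * Real.pi * (τ : ℝ) * (u : ℝ) / (N : ℝ) : ℝ) : ℂ)))) ^ 2
      = (N : ℝ) * (∑ u ∈ Finset.Icc 1 (N / 2 - 1), (Norm.norm (A u)) ^ 2)
        + ((N / 2 - 1 : ℕ) : ℝ) * ((N : ℝ) * R ^ 2) := by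
    rw [Finset.sum_congr rfl fun u hu => by
      have h1 : 1 ≤ u := (Finset.mem_Icc.mp hu).1
      have h2 : u < N := by have := (Finset.mem_Icc.mp hu).2; omega
      exact tauSum14 N hN0 R (A u) u h1 h2 (expsum N hN0 u h1 h2)]
    rw [Finset.sum_congr rfl (fun u _ => by ring :
      ∀ u ∈ Finset.Icc 1 (N / 2 - 1), (N:ℝ) * ((Norm.norm (A u))^2 + R^2)
        = (N:ℝ) * (Norm.norm (A u))^2 + (N:ℝ) * R^2)]
    rw [Finset.sum_add_distrib, Finset.sum_const, Nat.card_Icc, ← Finset.mul_sum, nsmul_eq_mul]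
    push_cast
    ring
  rw [hswap, hins, Finset.sum_insert (by simp), h0, hrest]
  have hc : ((N / 2 - 1 : ℕ) : ℝ) = (N : ℝ) / 2 - 1 := by
    obtain ⟨m, hm⟩ := hNeven
    have h1 : N / 2 - 1 = m - 1 := by omega
    have h2 : 1 ≤ m := by omega
    rw [h1, hm]
    push_cast [Nat.cast_sub h2]
    ring
  rw [hc]
  have hNne : (N : ℝ) ≠ 0 := Nat.cast_ne_zero.mpr hN0.ne'
  field_simp
  ring
end

section
/- Let N be an even positive integer with N ≥ 4, let R be a real number, let A : ℕ → ℂ, and define J(τ) = ∑_{u=0}^{N/2−1} |A(u) + R·exp(i·2πτu/N)|² for integer τ. Then for every integer u with 1 ≤ u ≤ N/2 − 1, R·A(u) = (1/N) ∑_{τ=0}^{N−1} J(τ) exp(i·2πτu/N). -/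
open Real Complex Finset

theorem stmt16 (N : ℕ) (hNeven : Even N) (hN : 4 ≤ N)
    (R : ℝ) (A : ℕ → ℂ) (J : ℤ → ℝ)
    (hJ : ∀ τ : ℤ, J τ = ∑ u ∈ Finset.range (N / 2), (Norm.norm (A u + (R : ℂ) * Complex.exp (Complex.I * ((2 * Real.pi * (τ : ℝ) * (u : ℝ) / (N : ℝ) : ℝ) : ℂ)))) ^ 2)
    (u : ℕ) (hu1 : 1 ≤ u) (hu2 : u ≤ N / 2 - 1) :
    (R : ℂ) * A u = (1 / (N : ℂ)) * ∑ τ ∈ Finset.Icc (0 : ℤ) ((N : ℤ) - 1),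
      (J τ : ℂ) * Complex.exp (Complex.I * ((2 * Real.pi * (τ : ℝ) * (u : ℝ) / (N : ℝ) : ℝ) : ℂ)) := by
  have hNpos : 0 < N := by omega
  set n2 := N / 2 with hn2
  have hN2 : N = 2 * n2 := by
    obtain ⟨k, hk⟩ := hNeven; omega
  have hun2 : u < n2 := by omega
  set ζ : ℂ := Complex.exp (2 * (π : ℂ) * Complex.I / N) with hζdef
  have hz : ζ ≠ 0 := Complex.exp_ne_zero _
  have hprim : IsPrimitiveRoot ζ N := Complex.isPrimitiveRoot_exp N (by omega)
  have hdvd : ∀ m : ℤ, ζ ^ m = 1 ↔ (N : ℤ) ∣ m := fun m => hprim.zpow_eq_one_iff_dvd m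
  -- geometric sum
  have hgeom : ∀ m : ℤ, ∑ t ∈ Finset.range N, (ζ ^ m) ^ t
      = if (N : ℤ) ∣ m then (N : ℂ) else 0 := by
    intro m
    by_cases hm : (N : ℤ) ∣ m
    · rw [if_pos hm, (hdvd m).2 hm]
      simp
    · rw [if_neg hm]
      have hne : ζ ^ m ≠ 1 := fun h => hm ((hdvd m).1 h)
      rw [geom_sum_eq hne]
      have : (ζ ^ m) ^ N = 1 := by
        rw [← zpow_natCast (ζ ^ m), ← zpow_mul, mul_comm, zpow_mul, zpow_natCast,
          hprim.pow_eq_one, one_zpow]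
      rw [this, sub_self, zero_div]
  -- express exp terms via ζ
  have hexp : ∀ (τ : ℤ) (w : ℕ),
      Complex.exp (Complex.I * ((2 * Real.pi * (τ : ℝ) * (w : ℝ) / (N : ℝ) : ℝ) : ℂ))
        = ζ ^ (τ * (w : ℤ)) := by
    intro τ w
    rw [hζdef, ← Complex.exp_int_mul]
    congr 1
    push_cast
    have hNne : (N : ℂ) ≠ 0 := Nat.cast_ne_zero.mpr (by omega)
    field_simp
  have hconjζ : ∀ k : ℤ, (starRingEnd ℂ) (ζ ^ k) = ζ ^ (-k) := by
    intro k
    have h1 : (starRingEnd ℂ) ζ = ζ⁻¹ := by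
      rw [hζdef, ← Complex.exp_conj, ← Complex.exp_neg]
      congr 1
      simp [map_div₀, map_ofNat]
      ring
    rw [map_zpow₀, h1, inv_zpow, ← zpow_neg]
  -- J as complex sum
  have hJC : ∀ τ : ℤ, (J τ : ℂ) = ∑ v ∈ Finset.range n2,
      (A v + (R : ℂ) * ζ ^ (τ * (v : ℤ))) *
        ((starRingEnd ℂ) (A v) + (R : ℂ) * ζ ^ (-(τ * (v : ℤ)))) := by
    intro τ
    rw [hJ τ, Complex.ofReal_sum]
    refine Finset.sum_congr rfl fun v _ => ?_
    rw [Complex.ofReal_pow, hexp τ v]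
    set z := A v + (R : ℂ) * ζ ^ (τ * (v : ℤ)) with hzz
    have : ((Norm.norm z : ℝ) : ℂ) ^ 2 = z * (starRingEnd ℂ) z := by
      rw [← Complex.ofReal_pow, Complex.sq_norm, Complex.mul_conj]
    rw [this, hzz, map_add, map_mul, Complex.conj_ofReal, hconjζ]
  -- pointwise expansion
  have expand : ∀ (t : ℕ) (v : ℕ),
      (A v + (R : ℂ) * ζ ^ ((t : ℤ) * (v : ℤ))) *
          ((starRingEnd ℂ) (A v) + (R : ℂ) * ζ ^ (-((t : ℤ) * (v : ℤ)))) *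
            ζ ^ ((t : ℤ) * (u : ℤ))
        = (A v * (starRingEnd ℂ) (A v) + (R : ℂ) ^ 2) * (ζ ^ (u : ℤ)) ^ t
            + (R : ℂ) * A v * (ζ ^ ((u : ℤ) - (v : ℤ))) ^ t
            + (R : ℂ) * (starRingEnd ℂ) (A v) * (ζ ^ ((v : ℤ) + (u : ℤ))) ^ t := by
    intro t v
    have h1 : (ζ ^ (u : ℤ)) ^ t = ζ ^ ((t : ℤ) * (u : ℤ)) := by
      rw [← zpow_natCast (ζ ^ (u : ℤ)), ← zpow_mul]; congr 1; ring
    have h2 : (ζ ^ ((u : ℤ) - (v : ℤ))) ^ t = ζ ^ (-((t : ℤ) * v) + (t : ℤ) * u) := by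
      rw [← zpow_natCast (ζ ^ ((u : ℤ) - (v : ℤ))), ← zpow_mul]; congr 1; ring
    have h3 : (ζ ^ ((v : ℤ) + (u : ℤ))) ^ t = ζ ^ ((t : ℤ) * v + (t : ℤ) * u) := by
      rw [← zpow_natCast (ζ ^ ((v : ℤ) + (u : ℤ))), ← zpow_mul]; congr 1; ring
    rw [h1, h2, h3, zpow_add₀ hz, zpow_add₀ hz, zpow_neg]
    have hzv : ζ ^ ((t : ℤ) * (v : ℤ)) ≠ 0 := zpow_ne_zero _ hz
    field_simp
    ring
  -- divisibility facts
  have hnd1 : ¬ (N : ℤ) ∣ (u : ℤ) := by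
    rw [Int.natCast_dvd_natCast]
    intro h
    have := Nat.le_of_dvd (by omega) h
    omega
  have hnd2 : ∀ v : ℕ, v < n2 → ¬ (N : ℤ) ∣ ((v : ℤ) + (u : ℤ)) := by
    intro v hv
    rw [show (v : ℤ) + (u : ℤ) = ((v + u : ℕ) : ℤ) by push_cast; ring,
      Int.natCast_dvd_natCast]
    intro h
    have := Nat.le_of_dvd (by omega) h
    omega
  have hnd3 : ∀ v : ℕ, v < n2 → (((N : ℤ) ∣ ((u : ℤ) - (v : ℤ))) ↔ v = u) := by
    intro v hv
    constructor
    · intro h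
      have habs : |(u : ℤ) - (v : ℤ)| < (N : ℤ) := by
        rw [abs_lt]; constructor <;> omega
      have := Int.eq_zero_of_abs_lt_dvd h habs
      omega
    · rintro rfl; simp
  -- the key sum computation
  have hsum : ∑ t ∈ Finset.range N, (J (t : ℤ) : ℂ) * ζ ^ ((t : ℤ) * (u : ℤ))
      = (N : ℂ) * ((R : ℂ) * A u) := by
    calc ∑ t ∈ Finset.range N, (J (t : ℤ) : ℂ) * ζ ^ ((t : ℤ) * (u : ℤ))
        = ∑ t ∈ Finset.range N, ∑ v ∈ Finset.range n2,
            ((A v * (starRingEnd ℂ) (A v) + (R : ℂ) ^ 2) * (ζ ^ (u : ℤ)) ^ t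
              + (R : ℂ) * A v * (ζ ^ ((u : ℤ) - (v : ℤ))) ^ t
              + (R : ℂ) * (starRingEnd ℂ) (A v) * (ζ ^ ((v : ℤ) + (u : ℤ))) ^ t) := by
          refine Finset.sum_congr rfl fun t _ => ?_
          rw [hJC, Finset.sum_mul]
          exact Finset.sum_congr rfl fun v _ => expand t v
      _ = ∑ v ∈ Finset.range n2, ∑ t ∈ Finset.range N,
            ((A v * (starRingEnd ℂ) (A v) + (R : ℂ) ^ 2) * (ζ ^ (u : ℤ)) ^ t
              + (R : ℂ) * A v * (ζ ^ ((u : ℤ) - (v : ℤ))) ^ t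
              + (R : ℂ) * (starRingEnd ℂ) (A v) * (ζ ^ ((v : ℤ) + (u : ℤ))) ^ t) :=
          Finset.sum_comm
      _ = ∑ v ∈ Finset.range n2, (if v = u then (R : ℂ) * A v * (N : ℂ) else 0) := by
          refine Finset.sum_congr rfl fun v hv => ?_
          have hvn2 : v < n2 := Finset.mem_range.mp hv
          rw [Finset.sum_add_distrib, Finset.sum_add_distrib,
            ← Finset.mul_sum, ← Finset.mul_sum, ← Finset.mul_sum,
            hgeom, hgeom, hgeom, if_neg hnd1, if_neg (hnd2 v hvn2)]
          by_cases hvu : v = u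
          · rw [if_pos ((hnd3 v hvn2).2 hvu), if_pos hvu]
            ring
          · rw [if_neg (fun h => hvu ((hnd3 v hvn2).1 h)), if_neg hvu]
            ring
      _ = (R : ℂ) * A u * (N : ℂ) := by
          rw [Finset.sum_ite_eq' (Finset.range n2) u (fun v => (R : ℂ) * A v * (N : ℂ)),
            if_pos (Finset.mem_range.mpr hun2)]
      _ = (N : ℂ) * ((R : ℂ) * A u) := by ring
  -- convert Icc sum to range sum
  have hIcc : Finset.Icc (0 : ℤ) ((N : ℤ) - 1)
      = Finset.map ⟨((↑) : ℕ → ℤ), Nat.cast_injective⟩ (Finset.range N) := by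
    ext x
    simp only [Finset.mem_Icc, Finset.mem_map, Finset.mem_range,
      Function.Embedding.coeFn_mk]
    constructor
    · rintro ⟨h0, h1⟩
      exact ⟨x.toNat, by omega, by omega⟩
    · rintro ⟨t, ht, rfl⟩
      omega
  rw [hIcc, Finset.sum_map]
  simp only [Function.Embedding.coeFn_mk]
  have hNne : (N : ℂ) ≠ 0 := Nat.cast_ne_zero.mpr (by omega)
  have : ∑ t ∈ Finset.range N, (J (t : ℤ) : ℂ) *
      Complex.exp (Complex.I * ((2 * Real.pi * ((t : ℤ) : ℝ) * (u : ℝ) / (N : ℝ) : ℝ) : ℂ))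
      = (N : ℂ) * ((R : ℂ) * A u) := by
    rw [← hsum]
    exact Finset.sum_congr rfl fun t _ => by rw [hexp]
  rw [this]
  field_simp
end

section
/- Let N be an even positive integer with N ≥ 4, let R be a real number, let A : ℕ → ℂ, and define J(τ) = ∑_{u=0}^{N/2−1} |A(u) + R·exp(i·2πτu/N)|² for integer τ. Then |A(0) + R|² = (1/N) ∑_{τ=0}^{N−1} J(τ) − ∑_{u₁=1}^{N/2−1} |A(u₁)|² − (N/2 − 1)·R². -/
open Real Complex Finset

lemma sum_exp_neg (N u : ℕ) (hN : 0 < N) (hu1 : 1 ≤ u) (hu2 : u < N) :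
    ∑ k ∈ Finset.range N, Complex.exp (-(Complex.I * ((2 * Real.pi * (k : ℝ) * (u : ℝ) / (N : ℝ) : ℝ) : ℂ))) = 0 := by
  have hNR : (0:ℝ) < N := by exact_mod_cast hN
  have hNC : (N:ℂ) ≠ 0 := by exact_mod_cast hNR.ne'
  set ζ : ℂ := Complex.exp (-(Complex.I * ((2 * Real.pi * (u : ℝ) / (N : ℝ) : ℝ) : ℂ))) with hζdef
  have hpow : ∀ k : ℕ, Complex.exp (-(Complex.I * ((2 * Real.pi * (k : ℝ) * (u : ℝ) / (N : ℝ) : ℝ) : ℂ))) = ζ ^ k := by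
    intro k
    rw [hζdef, ← Complex.exp_nat_mul]
    congr 1
    push_cast
    ring
  simp_rw [hpow]
  have hζ1 : ζ ≠ 1 := by
    intro h
    rw [hζdef, Complex.exp_eq_one_iff] at h
    obtain ⟨n, hn⟩ := h
    have h4 := congrArg Complex.im hn
    simp at h4
    have hπ := Real.pi_pos
    have h5 : (u : ℝ) / N = (-n : ℝ) := by
      field_simp at h4 ⊢
      nlinarith [h4]
    have h6 : (0:ℝ) < (u:ℝ)/N := by positivity
    have h7 : (u:ℝ)/N < 1 := by
      rw [div_lt_one hNR]; exact_mod_cast hu2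
    rw [h5] at h6 h7
    have : (0:ℤ) < -n := by exact_mod_cast h6
    have : (-n : ℤ) < 1 := by exact_mod_cast h7
    omega
  rw [geom_sum_eq hζ1]
  have hζN : ζ ^ N = 1 := by
    rw [hζdef, ← Complex.exp_nat_mul]
    have : (N : ℂ) * -(Complex.I * ((2 * Real.pi * (u : ℝ) / (N : ℝ) : ℝ) : ℂ)) = ((-u : ℤ) : ℂ) * (2 * Real.pi * Complex.I) := by
      push_cast
      field_simp
    rw [this, Complex.exp_int_mul_two_pi_mul_I]
  simp [hζN]

lemma holo_inner_sum (N : ℕ) (hN : 0 < N) (R : ℝ) (a : ℂ) (u : ℕ) (hu : u < N) :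
    ∑ k ∈ Finset.range N, (Norm.norm (a + (R:ℂ) * Complex.exp (Complex.I * ((2 * Real.pi * (k : ℝ) * (u : ℝ) / (N : ℝ) : ℝ) : ℂ))))^2
      = if u = 0 then (N:ℝ) * (Norm.norm (a + (R:ℂ)))^2 else (N:ℝ) * ((Norm.norm a)^2 + R^2) := by
  rcases eq_or_ne u 0 with h | h
  · subst h
    simp only [Nat.cast_zero, mul_zero, zero_div, Complex.ofReal_zero, Complex.exp_zero, mul_one,
      Finset.sum_const, Finset.card_range, nsmul_eq_mul, if_true]
  · rw [if_neg h]
    have hconj : ∀ x : ℝ, (starRingEnd ℂ) ((R:ℂ) * Complex.exp (Complex.I * (x:ℂ)))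
        = (R:ℂ) * Complex.exp (-(Complex.I * (x:ℂ))) := by
      intro x
      rw [map_mul, Complex.conj_ofReal, ← Complex.exp_conj, map_mul, Complex.conj_I,
        Complex.conj_ofReal, neg_mul]
    have hterm : ∀ x : ℝ, (Norm.norm (a + (R:ℂ) * Complex.exp (Complex.I * (x:ℂ))))^2
        = Complex.normSq a + R^2 + 2 * R * (a * Complex.exp (-(Complex.I * (x:ℂ)))).re := by
      intro x
      rw [Complex.sq_norm, Complex.normSq_add, hconj]
      have habs : Complex.normSq ((R:ℂ) * Complex.exp (Complex.I * (x:ℂ))) = R^2 := by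
        rw [Complex.normSq_mul, Complex.normSq_eq_norm_sq, Complex.normSq_eq_norm_sq, mul_comm Complex.I,
          Complex.norm_exp_ofReal_mul_I]
        simp [_root_.sq_abs]
      rw [habs]
      have : a * ((R:ℂ) * Complex.exp (-(Complex.I * (x:ℂ)))) = (R:ℂ) * (a * Complex.exp (-(Complex.I * (x:ℂ)))) := by ring
      rw [this, Complex.mul_re]
      simp
      ring
    simp_rw [hterm]
    rw [Finset.sum_add_distrib, Finset.sum_add_distrib, Finset.sum_const, Finset.card_range]
    have hcross : ∑ k ∈ Finset.range N, 2 * R * (a * Complex.exp (-(Complex.I * ((2 * Real.pi * (k : ℝ) * (u : ℝ) / (N : ℝ) : ℝ) : ℂ)))).re = 0 := by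
      rw [← Finset.mul_sum, ← Complex.re_sum, ← Finset.mul_sum, sum_exp_neg N u hN (by omega) hu]
      simp
    rw [hcross, Complex.sq_norm]
    simp [nsmul_eq_mul]
    ring

theorem stmt17 (N : ℕ) (hNeven : Even N) (hN : 4 ≤ N)
    (R : ℝ) (A : ℕ → ℂ) (J : ℤ → ℝ)
    (hJ : ∀ τ : ℤ, J τ = ∑ u ∈ Finset.range (N / 2), (Norm.norm (A u + (R : ℂ) * Complex.exp (Complex.I * ((2 * Real.pi * (τ : ℝ) * (u : ℝ) / (N : ℝ) : ℝ) : ℂ)))) ^ 2) :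
    (Norm.norm (A 0 + (R : ℂ))) ^ 2 = (1 / (N : ℝ)) * ∑ τ ∈ Finset.Icc (0 : ℤ) ((N : ℤ) - 1), J τ - ∑ u₁ ∈ Finset.Icc 1 (N / 2 - 1), (Norm.norm (A u₁)) ^ 2 - ((N : ℝ) / 2 - 1) * R ^ 2 := by
  obtain ⟨m, hm⟩ := hNeven
  subst hm
  have hm2 : 2 ≤ m := by omega
  have hNpos : 0 < m + m := by omega
  have hNR : (0:ℝ) < ((m+m : ℕ) : ℝ) := by exact_mod_cast hNpos
  have hhalf : (m + m) / 2 = m := by omega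
  let emb : ℕ ↪ ℤ := ⟨fun k => (k:ℤ), fun a b h => by simpa using h⟩
  have hmap : Finset.Icc (0:ℤ) (((m+m : ℕ) : ℤ) - 1)
      = (Finset.range (m+m)).map emb := by
    ext x
    simp only [Finset.mem_Icc, Finset.mem_map, Finset.mem_range, Function.Embedding.coeFn_mk, emb]
    constructor
    · rintro ⟨h1, h2⟩; exact ⟨x.toNat, by omega, by change ((x.toNat : ℕ) : ℤ) = x; omega⟩
    · rintro ⟨k, hk, rfl⟩; change 0 ≤ (k:ℤ) ∧ (k:ℤ) ≤ ((m+m:ℕ):ℤ) - 1; omega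
  rw [hmap, Finset.sum_map]
  simp only [Function.Embedding.coeFn_mk, emb]
  show _ = _ * ∑ x ∈ Finset.range (m+m), J (x : ℤ) - _ - _
  have hsum : ∑ k ∈ Finset.range (m+m), J (k : ℤ)
      = ((m+m : ℕ) : ℝ) * (Norm.norm (A 0 + (R:ℂ)))^2
        + ∑ u ∈ Finset.Icc 1 (m-1), ((m+m : ℕ) : ℝ) * ((Norm.norm (A u))^2 + R^2) := by
    have hJk : ∀ k : ℕ, J (k : ℤ) = ∑ u ∈ Finset.range m,
        (Norm.norm (A u + (R : ℂ) * Complex.exp (Complex.I * ((2 * Real.pi * (k : ℝ) * (u : ℝ) / ((m+m : ℕ) : ℝ) : ℝ) : ℂ)))) ^ 2 := by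
      intro k
      rw [hJ, hhalf]
      norm_num
    simp_rw [hJk]
    rw [Finset.sum_comm]
    have heach : ∀ u ∈ Finset.range m, ∑ k ∈ Finset.range (m+m),
        (Norm.norm (A u + (R : ℂ) * Complex.exp (Complex.I * ((2 * Real.pi * (k : ℝ) * (u : ℝ) / ((m+m : ℕ) : ℝ) : ℝ) : ℂ)))) ^ 2
        = if u = 0 then ((m+m : ℕ):ℝ) * (Norm.norm (A u + (R:ℂ)))^2 else ((m+m : ℕ):ℝ) * ((Norm.norm (A u))^2 + R^2) := by
      intro u hu
      rw [Finset.mem_range] at hu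
      exact holo_inner_sum (m+m) hNpos R (A u) u (by omega)
    rw [Finset.sum_congr rfl heach]
    have h1 : Finset.Icc 1 (m-1) = Finset.Ico 1 m := by
      ext x; simp only [Finset.mem_Icc, Finset.mem_Ico]; omega
    rw [Finset.range_eq_Ico, Finset.sum_eq_sum_Ico_succ_bot (by omega : 0 < m), if_pos rfl, h1]
    congr 1
    apply Finset.sum_congr rfl
    intro u hu
    rw [Finset.mem_Ico] at hu
    rw [if_neg (by omega)]
  rw [hsum, hhalf]
  simp_rw [mul_add]
  rw [Finset.sum_add_distrib, ← Finset.mul_sum, Finset.sum_const, Nat.card_Icc]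
  have hcard : ((m - 1 + 1 - 1 : ℕ) : ℝ) = (m : ℝ) - 1 := by
    have : m - 1 + 1 - 1 = m - 1 := by omega
    rw [this, Nat.cast_sub (by omega)]
    norm_num
  push_cast [hcard]
  field_simp
  rw [nsmul_eq_mul, Nat.cast_sub (by omega : 1 ≤ m)]
  ring
end

section
/- Let N be an even positive integer with N ≥ 4, let R be a real number, let A : ℕ → ℂ, and define J(τ) = ∑_{u=0}^{N/2−1} |A(u) + R·exp(i·2πτu/N)|² for integer τ (including negative τ). Then |A(0) + R|² = (1/N) ∑_{τ=−N/2}^{N/2−1} J(τ) − ∑_{u₁=1}^{N/2−1} |A(u₁)|² − (N/2 − 1)·R². -/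
open Real Complex Finset

lemma zsum (N : ℕ) (hN0 : 0 < N) (u : ℕ) (hu1 : 0 < u) (hu2 : u < N) (a : ℤ) :
    ∑ τ ∈ Finset.Icc a (a + N - 1),
      Complex.exp (Complex.I * ((2 * Real.pi * (τ : ℝ) * (u : ℝ) / (N : ℝ) : ℝ) : ℂ)) = 0 := by
  set ω := Complex.exp (2 * Real.pi * Complex.I / N) with hω_def
  have hω : IsPrimitiveRoot ω N := Complex.isPrimitiveRoot_exp N hN0.ne'
  set ζ := ω ^ u with hζ_def
  have hζ0 : ζ ≠ 0 := pow_ne_zero _ (Complex.exp_ne_zero _)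
  have hζN : ζ ^ N = 1 := by
    rw [hζ_def, ← pow_mul, mul_comm, pow_mul, hω.pow_eq_one, one_pow]
  have hζ1 : ζ ≠ 1 := by
    intro h
    have := (hω.pow_eq_one_iff_dvd u).mp h
    have := Nat.le_of_dvd hu1 this
    omega
  have hexp : ∀ τ : ℤ, Complex.exp (Complex.I * ((2 * Real.pi * (τ : ℝ) * (u : ℝ) / (N : ℝ) : ℝ) : ℂ)) = ζ ^ τ := by
    intro τ
    have h1 : ζ ^ τ = Complex.exp (((u : ℤ) * τ : ℤ) * (2 * Real.pi * Complex.I / N)) := by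
      rw [Complex.exp_int_mul, ← hω_def, zpow_mul, zpow_natCast, ← hζ_def]
    rw [h1]
    congr 1
    have hN' : (N : ℂ) ≠ 0 := Nat.cast_ne_zero.mpr hN0.ne'
    push_cast
    field_simp
  simp only [hexp]
  rw [Int.Icc_eq_finset_map, Finset.sum_map]
  have hcard : (a + (N : ℤ) - 1 + 1 - a).toNat = N := by omega
  rw [hcard]
  have : ∀ k : ℕ, ζ ^ ((Nat.castEmbedding.trans (addLeftEmbedding a)) k) = ζ ^ a * ζ ^ k := by
    intro k
    simp [Nat.castEmbedding, addLeftEmbedding, zpow_add₀ hζ0]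
  simp only [this, ← Finset.mul_sum]
  rw [geom_sum_eq hζ1, hζN]
  simp

theorem stmt19 (N : ℕ) (hNeven : Even N) (hN : 4 ≤ N)
    (R : ℝ) (A : ℕ → ℂ) (J : ℤ → ℝ)
    (hJ : ∀ τ : ℤ, J τ = ∑ u ∈ Finset.range (N / 2), ‖A u + (R : ℂ) * Complex.exp (Complex.I * ((2 * Real.pi * (τ : ℝ) * (u : ℝ) / (N : ℝ) : ℝ) : ℂ))‖ ^ 2) :
    ‖A 0 + (R : ℂ)‖ ^ 2 = (1 / (N : ℝ)) * ∑ τ ∈ Finset.Icc (-((N : ℤ) / 2)) ((N : ℤ) / 2 - 1), J τ - ∑ u₁ ∈ Finset.Icc 1 (N / 2 - 1), ‖A u₁‖ ^ 2 - ((N : ℝ) / 2 - 1) * R ^ 2 := by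
  obtain ⟨m', hm'⟩ := hNeven
  set m : ℕ := N / 2 with hm_def
  have hNm : N = 2 * m := by omega
  have hm2 : 2 ≤ m := by omega
  have hzdiv : ((N : ℤ) / 2) = (m : ℤ) := by omega
  set T : Finset ℤ := Finset.Icc (-((N : ℤ) / 2)) ((N : ℤ) / 2 - 1) with hT_def
  have hTcard : T.card = N := by
    rw [hT_def, Int.card_Icc]
    omega
  set e : ℤ → ℕ → ℂ := fun τ u => Complex.exp (Complex.I * ((2 * Real.pi * (τ : ℝ) * (u : ℝ) / (N : ℝ) : ℝ) : ℂ)) with he_def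
  -- the zero-sum lemma specialized
  have hzero : ∀ u : ℕ, 0 < u → u < N → ∑ τ ∈ T, e τ u = 0 := by
    intro u h1 h2
    have := zsum N (by omega) u h1 h2 (-((N : ℤ) / 2))
    have hend : -((N : ℤ) / 2) + N - 1 = (N : ℤ) / 2 - 1 := by omega
    rw [hend] at this
    exact this
  -- per-u computation
  have key : ∀ u ∈ Finset.range m,
      ∑ τ ∈ T, ‖A u + (R : ℂ) * e τ u‖ ^ 2
        = if u = 0 then (N : ℝ) * ‖A 0 + (R : ℂ)‖ ^ 2
          else (N : ℝ) * (‖A u‖ ^ 2 + R ^ 2) := by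
    intro u hu
    rw [Finset.mem_range] at hu
    by_cases h0 : u = 0
    · subst h0
      have : ∀ τ : ℤ, e τ 0 = 1 := by
        intro τ
        simp [he_def]
      simp only [this, mul_one]
      rw [Finset.sum_const, hTcard, nsmul_eq_mul]
      simp
    · rw [if_neg h0]
      have hnorm1 : ∀ τ : ℤ, Complex.normSq (e τ u) = 1 := by
        intro τ
        rw [he_def]
        simp only [Complex.normSq_eq_norm_sq, Complex.norm_exp]
        norm_num [Complex.mul_re]
      have expand : ∀ τ : ℤ, ‖A u + (R : ℂ) * e τ u‖ ^ 2
          = (‖A u‖ ^ 2 + R ^ 2) + 2 * (A u * ((R : ℂ) * (starRingEnd ℂ) (e τ u))).re := by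
        intro τ
        rw [Complex.sq_norm, Complex.normSq_add, Complex.sq_norm, Complex.normSq_mul, hnorm1]
        rw [map_mul, Complex.conj_ofReal]
        simp [Complex.normSq_ofReal, sq]
      simp only [expand]
      rw [Finset.sum_add_distrib, Finset.sum_const, hTcard, nsmul_eq_mul]
      have hcross : ∑ τ ∈ T, 2 * (A u * ((R : ℂ) * (starRingEnd ℂ) (e τ u))).re = 0 := by
        rw [← Finset.mul_sum, ← Complex.re_sum]
        have : ∑ τ ∈ T, A u * ((R : ℂ) * (starRingEnd ℂ) (e τ u))
            = A u * (R : ℂ) * (starRingEnd ℂ) (∑ τ ∈ T, e τ u) := by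
          rw [map_sum, Finset.mul_sum]
          congr 1; ext τ; ring
        rw [this, hzero u (by omega) (by omega)]
        simp
      rw [hcross, add_zero]
  -- total sum
  have hS : ∑ τ ∈ T, J τ
      = (N : ℝ) * ‖A 0 + (R : ℂ)‖ ^ 2
        + ∑ u ∈ Finset.Ico 1 m, (N : ℝ) * (‖A u‖ ^ 2 + R ^ 2) := by
    simp only [hJ]
    rw [Finset.sum_comm]
    rw [Finset.sum_congr rfl key]
    have hsplit : Finset.range m = insert 0 (Finset.Ico 1 m) := by
      ext x
      simp [Finset.mem_range, Finset.mem_Ico]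
      omega
    rw [hsplit, Finset.sum_insert (by simp)]
    rw [if_pos rfl]
    congr 1
    apply Finset.sum_congr rfl
    intro x hx
    rw [Finset.mem_Ico] at hx
    rw [if_neg (by omega)]
  rw [hS]
  have hIcc : Finset.Icc 1 (N / 2 - 1) = Finset.Ico 1 m := by
    ext x
    simp [Finset.mem_Icc, Finset.mem_Ico]
    omega
  rw [hIcc]
  have hN0 : (N : ℝ) ≠ 0 := by positivity
  have hm1 : ((m - 1 : ℕ) : ℝ) = (m : ℝ) - 1 := by
    push_cast [Nat.cast_sub (by omega : 1 ≤ m)]; ring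
  have hsum2 : ∑ u ∈ Finset.Ico 1 m, (N : ℝ) * (‖A u‖ ^ 2 + R ^ 2)
      = (N : ℝ) * (∑ u ∈ Finset.Ico 1 m, ‖A u‖ ^ 2) + (N : ℝ) * ((m : ℝ) - 1) * R ^ 2 := by
    simp only [mul_add]
    rw [Finset.sum_add_distrib, ← Finset.mul_sum, Finset.sum_const, Nat.card_Ico, nsmul_eq_mul, hm1]
    ring
  rw [hsum2]
  have hm' : (m : ℝ) = (N : ℝ) / 2 := by rw [hNm]; push_cast; ring
  rw [hm']
  field_simp
  ring
end
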